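/- arXiv:2402.03489 — 3 statements merged into one kernel-verified Lean document; each statement's English description precedes it below -/
import Mathlib

section
/- Suppose the probability distribution μ on ℕ satisfies ∑_{n≥1} n μ(n) < ∞. Then for any initial configuration X₀ ∈ 𝒮 and any k ∈ ℤ such that X₀(k) < ∞, the IBM(μ) started from X₀ satisfies X_∞(k) < ∞ almost surely. -/
open MeasureTheory ProbabilityTheory Filter Set
open scoped ENNReal Topology Classical

noncomputable section

/-- A configuration of balls: the number of balls (in `ℤ₊ ∪ {∞}`) in each bin. -/
abbrev Config := ℤ → ℕ∞

/-- A valid configuration: the support is nonempty and bounded above. -/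
def IsConfig (X : Config) : Prop :=
  (∃ j, X j ≠ 0) ∧ ∃ M : ℤ, ∀ j, X j ≠ 0 → j ≤ M

/-- `tailSum X j = ∑_{i ≥ j} X i`. -/
def tailSum (X : Config) (j : ℤ) : ℕ∞ :=
  ⨆ m : ℤ, ∑ i ∈ Finset.Icc j m, X i

/-- One step of the infinite-bin model dynamics: `Phi ξ X` adds one ball to the bin
immediately to the right of the bin containing the `ξ`-th rightmost ball of `X`
(i.e. to bin `B(X,ξ) + 1` where `B(X,ξ) = sup {j : ∑_{i ≥ j} X i ≥ ξ}`), and does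
nothing when `B(X,ξ) = -∞`, i.e. when no bin `j` satisfies `∑_{i ≥ j} X i ≥ ξ`. -/
def Phi (ξ : ℕ) (X : Config) : Config := fun j =>
  X j + (if (ξ : ℕ∞) ≤ tailSum X (j - 1) ∧ ¬ (ξ : ℕ∞) ≤ tailSum X j then 1 else 0)

/-- The infinite-bin model driven by the sequence `ξ`, started from `X₀`:
`X_{n+1} = Phi (ξ n) X_n`. -/
def ibm (X₀ : Config) (ξ : ℕ → ℕ) : ℕ → Config
  | 0 => X₀
  | n + 1 => Phi (ξ n) (ibm X₀ ξ n)

/-- `X_∞(k)`: the limit (= supremum, by monotonicity) of the number of balls in bin `k`. -/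
def ibmLimit (X₀ : Config) (ξ : ℕ → ℕ) (k : ℤ) : ℕ∞ :=
  ⨆ n, ibm X₀ ξ n k

/-- `ξ` is a sequence of i.i.d. random variables with law `μ` on `(Ω, P)`. -/
def IsIIDSeq {Ω : Type*} [MeasurableSpace Ω] (P : Measure Ω) (μ : Measure ℕ)
    (ξ : ℕ → Ω → ℕ) : Prop :=
  (∀ n, Measurable (ξ n)) ∧
    iIndepFun ξ P ∧ ∀ n, P.map (ξ n) = μ

/-- The barrier configuration `X̂₀`: an infinite bin at `0`, all other bins empty. -/
def barrier : Config := fun j => if j = 0 then ⊤ else 0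

/-- The tail `μ̄(j) = μ({j, j+1, ...})` of a distribution on `ℕ`. -/
def tailμ (μ : Measure ℕ) (j : ℕ) : ℝ≥0∞ := μ {i | j ≤ i}

/-- `μ` (represented by the i.i.d. driving sequence `ξ` on `(Ω, P)`) is of type `d`:
almost surely, `d = inf {k ≥ 1 : X̂_∞(k) < ∞}` for the IBM started from the barrier
configuration (with `inf ∅ = ∞` in `ℕ ∪ {∞}`). -/
def IsTypeOf {Ω : Type*} [MeasurableSpace Ω] (P : Measure Ω) (ξ : ℕ → Ω → ℕ)
    (d : ℕ∞) : Prop :=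
  ∀ᵐ ω ∂P, sInf {k : ℕ∞ | ∃ m : ℕ, 1 ≤ m ∧ k = (m : ℕ∞) ∧
    ibmLimit barrier (fun i => ξ i ω) (m : ℤ) < ⊤} = d

/-- `δ ∈ ℤ ∪ {-∞}` is the position `δ(X) = sup {j : X j = ∞}` of the rightmost
infinite bin ("barrier") of `X`, with `sup ∅ = -∞ = ⊥`. -/
def IsRightmostBarrier (X : Config) (δ : WithBot ℤ) : Prop :=
  (∀ j : ℤ, X j = ⊤ → (j : WithBot ℤ) ≤ δ) ∧
    (∀ j : ℤ, (j : WithBot ℤ) ≤ δ → ∃ i : ℤ, j ≤ i ∧ X i = ⊤)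

end


/-! ### Auxiliary material for the proof of Statement 0 -/

namespace IBMaux

/-- The predicate "at step driven by `ξ`, configuration `X` gains a ball in bin `i`". -/
def gainAt (ξ : ℕ) (X : Config) (i : ℤ) : Prop :=
  (ξ : ℕ∞) ≤ tailSum X (i - 1) ∧ ¬ (ξ : ℕ∞) ≤ tailSum X i

lemma Phi_apply (ξ : ℕ) (X : Config) (j : ℤ) :
    Phi ξ X j = X j + (if gainAt ξ X j then 1 else 0) := by simp [Phi, gainAt]

lemma tailSum_anti (X : Config) : Antitone (tailSum X) := by
  intro j j' h
  exact iSup_mono fun m => Finset.sum_le_sum_of_subset (Finset.Icc_subset_Icc_left h)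

lemma tailSum_eq_zero (X : Config) (j : ℤ) (h : ∀ i, j ≤ i → X i = 0) : tailSum X j = 0 := by
  simp only [tailSum]
  refine le_antisymm (iSup_le fun m => ?_) zero_le
  rw [Finset.sum_eq_zero fun i hi => h i (Finset.mem_Icc.1 hi).1]

lemma exists_ne_zero_of_one_le_tailSum {X : Config} {j : ℤ} (h : 1 ≤ tailSum X j) :
    ∃ i, j ≤ i ∧ X i ≠ 0 := by
  by_contra hc
  push_neg at hc
  rw [tailSum_eq_zero X j hc] at h
  simp at h

lemma gainAt_pos {ξ : ℕ} {X : Config} {i : ℤ} (h : gainAt ξ X i) : 1 ≤ ξ := by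
  rcases Nat.eq_zero_or_pos ξ with h0 | h1
  · exact absurd (by simp [h0] : (ξ:ℕ∞) ≤ tailSum X i) h.2
  · exact h1

lemma gainAt_unique {ξ : ℕ} {X : Config} {i i' : ℤ} (h : gainAt ξ X i) (h' : gainAt ξ X i') :
    i = i' := by
  by_contra hne
  rcases lt_or_gt_of_ne hne with hlt | hlt
  · exact h.2 (h'.1.trans (tailSum_anti X (by omega : i ≤ i' - 1)))
  · exact h'.2 (h.1.trans (tailSum_anti X (by omega : i' ≤ i - 1)))

lemma sum_Icc_mono (X : Config) (j : ℤ) :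
    Monotone (fun m => ∑ i ∈ Finset.Icc j m, X i) := fun _ _ h =>
  Finset.sum_le_sum_of_subset (Finset.Icc_subset_Icc_right h)

lemma tailSum_Phi (ξ : ℕ) (X : Config) (j : ℤ) :
    tailSum (Phi ξ X) j = tailSum X j + (if ∃ i, j ≤ i ∧ gainAt ξ X i then 1 else 0) := by
  have hsum : ∀ m : ℤ, ∑ i ∈ Finset.Icc j m, Phi ξ X i
      = (∑ i ∈ Finset.Icc j m, X i) + ∑ i ∈ Finset.Icc j m, (if gainAt ξ X i then 1 else 0) := by
    intro m
    rw [← Finset.sum_add_distrib]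
    exact Finset.sum_congr rfl fun i _ => Phi_apply ξ X i
  by_cases hex : ∃ i, j ≤ i ∧ gainAt ξ X i
  · obtain ⟨b, hjb, hb⟩ := hex
    simp only [tailSum, hsum, if_pos (⟨b, hjb, hb⟩ : ∃ i, j ≤ i ∧ gainAt ξ X i)]
    have hind : ∀ m : ℤ, (∑ i ∈ Finset.Icc j m, (if gainAt ξ X i then (1:ℕ∞) else 0))
        = if b ≤ m then 1 else 0 := by
      intro m
      have : ∀ i ∈ Finset.Icc j m, (if gainAt ξ X i then (1:ℕ∞) else 0)
          = if i = b then 1 else 0 := by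
        intro i _
        by_cases hib : i = b
        · simp [hib, hb]
        · simp only [if_neg hib, ite_eq_right_iff]
          intro hg
          exact absurd (gainAt_unique hg hb) hib
      rw [Finset.sum_congr rfl this, Finset.sum_ite_eq' (Finset.Icc j m) b (fun _ => (1:ℕ∞))]
      simp [Finset.mem_Icc, hjb]
    simp only [hind]
    refine le_antisymm (iSup_le fun m => ?_) ?_
    · refine add_le_add (le_iSup (fun m => ∑ i ∈ Finset.Icc j m, X i) m) ?_
      split <;> simp
    · rw [ENat.iSup_add]
      refine iSup_le fun m => ?_
      have h1 : (∑ i ∈ Finset.Icc j m, X i) + 1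
          ≤ (∑ i ∈ Finset.Icc j (max m b), X i) + (if b ≤ max m b then (1:ℕ∞) else 0) := by
        rw [if_pos (le_max_right m b)]
        exact add_le_add (sum_Icc_mono X j (le_max_left m b)) le_rfl
      exact h1.trans
        (le_iSup (fun m => (∑ i ∈ Finset.Icc j m, X i) + if b ≤ m then (1:ℕ∞) else 0) (max m b))
  · simp only [tailSum, hsum, if_neg hex, add_zero]
    congr 1
    funext m
    have : ∀ i ∈ Finset.Icc j m, (if gainAt ξ X i then (1:ℕ∞) else 0) = 0 := by
      intro i hi
      rw [if_neg]
      exact fun hg => hex ⟨i, (Finset.mem_Icc.1 hi).1, hg⟩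
    rw [Finset.sum_congr rfl this]
    simp

variable (X₀ : Config) (a : ℕ → ℕ) (k : ℤ)

/-- landing at a bin `≥ k` happens at step `n` -/
def Landing (n : ℕ) : Prop := ∃ i, k ≤ i ∧ gainAt (a n) (ibm X₀ a n) i

/-- number of landings at bins `≥ k` among steps `0, …, n-1` -/
noncomputable def Nland (n : ℕ) : ℕ := ((Finset.range n).filter (Landing X₀ a k)).card

/-- a ball is added to bin `k` at step `n` -/
def Receipt (n : ℕ) : Prop := gainAt (a n) (ibm X₀ a n) k

lemma receipt_landing {n : ℕ} (h : Receipt X₀ a k n) : Landing X₀ a k n := ⟨k, le_rfl, h⟩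

lemma Nland_succ (n : ℕ) :
    Nland X₀ a k (n + 1) = Nland X₀ a k n + (if Landing X₀ a k n then 1 else 0) := by
  simp only [Nland, Finset.range_add_one, Finset.filter_insert]
  split
  · rw [Finset.card_insert_of_notMem (by simp)]
  · simp

lemma tailSum_ibm (n : ℕ) :
    tailSum (ibm X₀ a n) k = tailSum X₀ k + (Nland X₀ a k n : ℕ∞) := by
  induction n with
  | zero => simp [Nland, ibm]
  | succ n ih =>
    show tailSum (Phi (a n) (ibm X₀ a n)) k = _
    rw [tailSum_Phi, ih, Nland_succ]
    change tailSum X₀ k + ↑(Nland X₀ a k n) + (if Landing X₀ a k n then 1 else 0) = _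
    by_cases hL : Landing X₀ a k n
    · rw [if_pos hL, if_pos hL]
      push_cast
      ring
    · rw [if_neg hL, if_neg hL]
      simp

lemma Nland_strict_mono {s s' : ℕ} (hss : s < s') (hs : Landing X₀ a k s) :
    Nland X₀ a k s < Nland X₀ a k s' := by
  have h1 : Nland X₀ a k s + 1 ≤ Nland X₀ a k (s+1) := by
    rw [Nland_succ, if_pos hs]
  have h2 : Nland X₀ a k (s+1) ≤ Nland X₀ a k s' := by
    apply Finset.card_le_card
    apply Finset.filter_subset_filter
    exact Finset.range_subset_range.2 hss
  omega

lemma ibm_bin_eq (n : ℕ) :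
    ibm X₀ a n k = X₀ k + (((Finset.range n).filter (Receipt X₀ a k)).card : ℕ∞) := by
  induction n with
  | zero => simp [ibm]
  | succ n ih =>
    show Phi (a n) (ibm X₀ a n) k = _
    rw [Phi_apply, ih, Finset.range_add_one, Finset.filter_insert]
    by_cases h : Receipt X₀ a k n
    · rw [if_pos h, Finset.card_insert_of_notMem (by simp)]
      unfold Receipt at h
      rw [if_pos h]
      push_cast; ring
    · rw [if_neg h]
      unfold Receipt at h
      rw [if_neg h, add_zero]

/-- dependence only on the first n values of the driving sequence -/
lemma ibm_congr {a b : ℕ → ℕ} (h : ∀ i < n, a i = b i) : ibm X₀ a n = ibm X₀ b n := by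
  induction n with
  | zero => rfl
  | succ n ih =>
    show Phi (a n) (ibm X₀ a n) = Phi (b n) (ibm X₀ b n)
    rw [ih fun i hi => h i (by omega), h n (by omega)]

lemma Landing_congr {a b : ℕ → ℕ} {n : ℕ} (h : ∀ i ≤ n, a i = b i) :
    Landing X₀ a k n ↔ Landing X₀ b k n := by
  unfold Landing
  rw [ibm_congr X₀ (fun i hi => h i (by omega)), h n le_rfl]

lemma Nland_congr {a b : ℕ → ℕ} {n : ℕ} (h : ∀ i < n, a i = b i) :
    Nland X₀ a k n = Nland X₀ b k n := by
  unfold Nland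
  congr 1
  apply Finset.filter_congr
  intro s hs
  simp only [Finset.mem_range] at hs
  exact Landing_congr X₀ k fun i hi => h i (by omega)

/-- support stays bounded: all bins above `M + n` are empty at time `n`. -/
lemma ibm_support {M : ℤ} (hM : ∀ j, X₀ j ≠ 0 → j ≤ M) :
    ∀ n : ℕ, ∀ j : ℤ, M + (n:ℤ) < j → ibm X₀ a n j = 0 := by
  intro n
  induction n with
  | zero => intro j hj; by_contra hne; exact absurd (hM j hne) (by push_cast at hj; omega)
  | succ n ih =>
    intro j hj
    show Phi (a n) (ibm X₀ a n) j = 0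
    rw [Phi_apply, ih j (by push_cast at hj ⊢; omega), zero_add]
    rw [if_neg]
    rintro ⟨h1, h2⟩
    have hξ : 1 ≤ a n := gainAt_pos ⟨h1, h2⟩
    have h1' : 1 ≤ tailSum (ibm X₀ a n) (j - 1) :=
      le_trans (by exact_mod_cast hξ) h1
    obtain ⟨i, hij, hi⟩ := exists_ne_zero_of_one_le_tailSum h1'
    exact hi (ih i (by push_cast at hj ⊢; omega))

/-- if `1 ≤ ξ_n ≤ tailSum (X_n) (k-1)` then a ball lands in some bin `≥ k` -/
lemma landing_of_le {M : ℤ} (hM : ∀ j, X₀ j ≠ 0 → j ≤ M) {n : ℕ}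
    (h1 : 1 ≤ a n) (h2 : (a n : ℕ∞) ≤ tailSum (ibm X₀ a n) (k - 1)) :
    Landing X₀ a k n := by
  set Y := ibm X₀ a n with hY
  have hzero : ∀ j : ℤ, M + (n:ℤ) < j → Y j = 0 := ibm_support X₀ a hM n
  have htail0 : ∀ j : ℤ, M + (n:ℤ) < j → tailSum Y j = 0 := fun j hj =>
    tailSum_eq_zero Y j fun i hi => hzero i (by omega)
  have h2' : 1 ≤ tailSum Y (k-1) := le_trans (by exact_mod_cast h1) h2
  obtain ⟨i0, hi0, hi0ne⟩ := exists_ne_zero_of_one_le_tailSum h2'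
  have hkM : k - 1 ≤ M + (n:ℤ) := by
    by_contra hc
    exact hi0ne (hzero i0 (by omega))
  set S := (Finset.Icc (k-1) (M + (n:ℤ))).filter (fun j => (a n : ℕ∞) ≤ tailSum Y j) with hS
  have hne : S.Nonempty := ⟨k - 1, by
    simp only [hS, Finset.mem_filter, Finset.mem_Icc]
    exact ⟨⟨le_rfl, hkM⟩, h2⟩⟩
  set b := S.max' hne with hb
  have hbS : b ∈ S := S.max'_mem hne
  simp only [hS, Finset.mem_filter, Finset.mem_Icc] at hbS
  refine ⟨b + 1, by omega, ?_, ?_⟩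
  · have : b + 1 - 1 = b := by omega
    rw [this]
    exact hbS.2
  · intro hle
    by_cases hbM : b + 1 ≤ M + (n:ℤ)
    · have : b + 1 ∈ S := by
        simp only [hS, Finset.mem_filter, Finset.mem_Icc]
        exact ⟨⟨by omega, hbM⟩, hle⟩
      have := S.le_max' _ this
      omega
    · rw [htail0 (b+1) (by omega)] at hle
      have : (a n : ℕ∞) = 0 := le_antisymm hle zero_le
      exact absurd (by exact_mod_cast this) (by omega)

lemma ibmLimit_of_top (h : tailSum X₀ k = ⊤) : ibmLimit X₀ a k = X₀ k := by
  have hno : ∀ n, ¬ Receipt X₀ a k n := by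
    intro n hR
    exact hR.2 (le_trans le_top (by rw [tailSum_ibm, h, top_add]))
  have hconst : ∀ n, ibm X₀ a n k = X₀ k := by
    intro n
    rw [ibm_bin_eq]
    rw [Finset.filter_false_of_mem fun s _ => hno s]
    simp
  simp only [ibmLimit, hconst, iSup_const]

lemma ibmLimit_le_of_bound {m₁ : ℕ} (h : ∀ s, Receipt X₀ a k s → Nland X₀ a k s < m₁) :
    ibmLimit X₀ a k ≤ X₀ k + (m₁ : ℕ∞) := by
  refine iSup_le fun n => ?_
  rw [ibm_bin_eq]
  refine add_le_add le_rfl ?_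
  have hcard : ((Finset.range n).filter (Receipt X₀ a k)).card ≤ m₁ := by
    have := Finset.card_le_card_of_injOn (f := fun s => Nland X₀ a k s)
      (s := (Finset.range n).filter (Receipt X₀ a k)) (t := Finset.range m₁)
      (fun s hs => by
        simp only [Finset.mem_coe, Finset.mem_filter, Finset.mem_range] at hs ⊢
        exact h s hs.2)
      (fun s hs s' hs' hee => by
        simp only [Finset.coe_filter, Finset.mem_range, Set.mem_setOf_eq] at hs hs'
        by_contra hne
        rcases lt_or_gt_of_ne hne with hlt | hlt
        · exact absurd hee
            (Nat.ne_of_lt (Nland_strict_mono X₀ a k hlt (receipt_landing X₀ a k hs.2)))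
        · exact absurd hee.symm
            (Nat.ne_of_lt (Nland_strict_mono X₀ a k hlt (receipt_landing X₀ a k hs'.2))))
    simpa using this
  exact_mod_cast hcard

/-! ### measure-theoretic lemmas -/

lemma meas_eq_tsum (μ : Measure ℕ) (S : Set ℕ) :
    μ S = ∑' n : ℕ, S.indicator (fun n => μ {n}) n := by
  rw [← tsum_subtype]
  have := tsum_measure_preimage_singleton (μ := μ) (S.to_countable) (f := id)
    (fun y _ => MeasurableSet.of_discrete)
  simpa using this.symm

lemma tailμ_anti (μ : Measure ℕ) : Antitone (tailμ μ) := fun _ _ h =>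
  measure_mono fun _ hi => le_trans h hi

lemma tsum_tailμ_le (μ : Measure ℕ) :
    ∑' m : ℕ, tailμ μ (m + 1) = ∑' n : ℕ, (n : ℝ≥0∞) * μ {n} := by
  have h1 : ∀ m : ℕ, tailμ μ (m + 1) = ∑' n : ℕ, (if m + 1 ≤ n then μ {n} else 0) := by
    intro m
    rw [tailμ, meas_eq_tsum]
    congr 1
    funext n
    by_cases h : m + 1 ≤ n <;> simp [Set.indicator, h] <;> intro h' <;> exfalso <;> omega
  calc ∑' m : ℕ, tailμ μ (m + 1) = ∑' m : ℕ, ∑' n : ℕ, (if m + 1 ≤ n then μ {n} else 0) := by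
        simp only [h1]
    _ = ∑' n : ℕ, ∑' m : ℕ, (if m + 1 ≤ n then μ {n} else 0) := ENNReal.tsum_comm
    _ = ∑' n : ℕ, (n : ℝ≥0∞) * μ {n} := by
        congr 1
        funext n
        rw [tsum_eq_sum (s := Finset.range n)
          (fun m hm => if_neg (by simp only [Finset.mem_range] at hm; omega))]
        rw [Finset.sum_congr rfl
          (fun m hm => if_pos (by simp only [Finset.mem_range] at hm; omega))]
        rw [Finset.sum_const, Finset.card_range, nsmul_eq_mul]

lemma exists_tail_small (μ : Measure ℕ) (hlt : ∑' m : ℕ, tailμ μ (m + 1) ≠ ⊤) (t0 : ℕ) :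
    ∃ m₀ : ℕ, ∀ m, m₀ ≤ m → tailμ μ (t0 + m + 1) ≤ 1/2 := by
  have htend : Filter.Tendsto (fun m : ℕ => tailμ μ (m + 1)) Filter.atTop (nhds 0) :=
    ENNReal.tendsto_atTop_zero_of_tsum_ne_top hlt
  have hev : ∀ᶠ m in Filter.atTop, tailμ μ (m + 1) < 1/2 :=
    htend.eventually_lt_const (by norm_num)
  obtain ⟨m₀, hm₀⟩ := Filter.eventually_atTop.1 hev
  refine ⟨m₀, fun m hm => ?_⟩
  exact le_trans (tailμ_anti μ (by omega : m + 1 ≤ t0 + m + 1)) (hm₀ m hm).le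

/-- the key pointwise measure inequality on windows -/
lemma window_bound (μ : Measure ℕ) [IsProbabilityMeasure μ] (hμ0 : μ {0} = 0)
    {q : ℕ} (hq : 1 ≤ q) (htail : tailμ μ q ≤ 1/2) (c : ℕ∞) :
    μ {x : ℕ | q ≤ x ∧ (x:ℕ∞) ≤ c} ≤ 2 * tailμ μ q * μ {x : ℕ | 1 ≤ x ∧ (x:ℕ∞) ≤ c} := by
  by_cases hqc : (q : ℕ∞) ≤ c
  · have hhalf : (1/2 : ℝ≥0∞) ≤ μ {x : ℕ | 1 ≤ x ∧ (x:ℕ∞) ≤ c} := by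
      have hsub : {x : ℕ | 1 ≤ x ∧ x < q} ⊆ {x : ℕ | 1 ≤ x ∧ (x:ℕ∞) ≤ c} := by
        rintro x ⟨hx1, hx2⟩
        exact ⟨hx1, le_trans (Nat.cast_le.mpr hx2.le) hqc⟩
      have hcover : (1:ℝ≥0∞) ≤ μ {x : ℕ | 1 ≤ x ∧ x < q} + tailμ μ q := by
        have huniv : (Set.univ : Set ℕ) ⊆ {0} ∪ ({x : ℕ | 1 ≤ x ∧ x < q} ∪ {i : ℕ | q ≤ i}) := by
          intro x _
          by_cases h0 : x = 0
          · exact Or.inl (by simp [h0])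
          · by_cases hxq : x < q
            · exact Or.inr (Or.inl ⟨by omega, hxq⟩)
            · exact Or.inr (Or.inr (by simp only [Set.mem_setOf_eq]; omega))
        calc (1:ℝ≥0∞) = μ Set.univ := (measure_univ).symm
          _ ≤ μ ({0} ∪ ({x : ℕ | 1 ≤ x ∧ x < q} ∪ {i : ℕ | q ≤ i})) := measure_mono huniv
          _ ≤ μ {0} + (μ {x : ℕ | 1 ≤ x ∧ x < q} + μ {i : ℕ | q ≤ i}) :=
              le_trans (measure_union_le _ _) (by gcongr; exact measure_union_le _ _)
          _ = μ {x : ℕ | 1 ≤ x ∧ x < q} + tailμ μ q := by rw [hμ0, zero_add]; rfl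
      by_contra hlt
      push_neg at hlt
      have h1 : μ {x : ℕ | 1 ≤ x ∧ x < q} < 1/2 := lt_of_le_of_lt (measure_mono hsub) hlt
      have hfin : (1:ℝ≥0∞) < 1 := by
        calc (1:ℝ≥0∞) ≤ μ {x : ℕ | 1 ≤ x ∧ x < q} + tailμ μ q := hcover
          _ ≤ μ {x : ℕ | 1 ≤ x ∧ x < q} + 1/2 := add_le_add le_rfl htail
          _ < 1/2 + 1/2 := ENNReal.add_lt_add_right (by norm_num) h1
          _ = 1 := ENNReal.add_halves 1
      exact absurd hfin (lt_irrefl 1)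
    calc μ {x : ℕ | q ≤ x ∧ (x:ℕ∞) ≤ c} ≤ tailμ μ q := measure_mono fun x hx => hx.1
      _ = 2 * tailμ μ q * (1/2) := by
          rw [mul_comm (2 : ℝ≥0∞) (tailμ μ q), mul_assoc]
          rw [show (2:ℝ≥0∞) * (1/2) = 1 by
            rw [one_div]; exact ENNReal.mul_inv_cancel (by norm_num) (by norm_num)]
          rw [mul_one]
      _ ≤ 2 * tailμ μ q * μ {x : ℕ | 1 ≤ x ∧ (x:ℕ∞) ≤ c} := by gcongr
  · have hempty : {x : ℕ | q ≤ x ∧ (x:ℕ∞) ≤ c} = ∅ := by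
      ext x
      simp only [Set.mem_setOf_eq, Set.mem_empty_iff_false, iff_false, not_and]
      intro hqx hxc
      exact hqc (le_trans (by exact_mod_cast hqx) hxc)
    rw [hempty]
    simp

end IBMaux

namespace IBMaux

section Main

variable {Ω : Type*} [MeasurableSpace Ω]

/-- extension of a finite tuple to a full sequence (by zero) -/
def extSeq (s : ℕ) (v : ↥(Finset.range s) → ℕ) : ℕ → ℕ := fun i =>
  if h : i ∈ Finset.range s then v ⟨i, h⟩ else 0

/-- history event: at time `s`, `Nland = m` and `tailSum` at `k-1` equals `c` -/
def Aset (ξ : ℕ → Ω → ℕ) (X₀ : Config) (k : ℤ) (s m : ℕ) (c : ℕ∞) : Set Ω :=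
  {ω | Nland X₀ (fun i => ξ i ω) k s = m ∧ tailSum (ibm X₀ (fun i => ξ i ω) s) (k-1) = c}

def Ev (ξ : ℕ → Ω → ℕ) (X₀ : Config) (k : ℤ) (q s m : ℕ) (c : ℕ∞) : Set Ω :=
  Aset ξ X₀ k s m c ∩ (ξ s) ⁻¹' {x : ℕ | q ≤ x ∧ (x:ℕ∞) ≤ c}

def Fev (ξ : ℕ → Ω → ℕ) (X₀ : Config) (k : ℤ) (t0 m : ℕ) : Set Ω :=
  ⋃ p : ℕ × ℕ∞, Ev ξ X₀ k (t0 + m + 1) p.1 m p.2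

lemma Aset_eq_preimage (ξ : ℕ → Ω → ℕ) (X₀ : Config) (k : ℤ) (s m : ℕ) (c : ℕ∞) :
    Aset ξ X₀ k s m c = (fun ω (i : ↥(Finset.range s)) => ξ i ω) ⁻¹'
      {v : ↥(Finset.range s) → ℕ |
        Nland X₀ (extSeq s v) k s = m ∧ tailSum (ibm X₀ (extSeq s v) s) (k-1) = c} := by
  ext ω
  have hagree : ∀ i < s, (fun i => ξ i ω) i = extSeq s (fun i : ↥(Finset.range s) => ξ i ω) i := by
    intro i hi
    simp only [extSeq, dif_pos (Finset.mem_range.2 hi)]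
  simp only [Aset, Set.mem_preimage, Set.mem_setOf_eq]
  rw [Nland_congr X₀ k hagree, ibm_congr X₀ hagree]

lemma Ev_measurable (ξ : ℕ → Ω → ℕ) (hmeas : ∀ n, Measurable (ξ n))
    (X₀ : Config) (k : ℤ) (q s m : ℕ) (c : ℕ∞) :
    MeasurableSet (Ev ξ X₀ k q s m c) := by
  refine MeasurableSet.inter ?_ (MeasurableSet.preimage MeasurableSet.of_discrete (hmeas s))
  rw [Aset_eq_preimage]
  exact MeasurableSet.preimage ((Set.to_countable _).measurableSet)
    (measurable_pi_lambda _ fun i => hmeas i)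

lemma Ev_measure (P : Measure Ω) (μ : Measure ℕ)
    (ξ : ℕ → Ω → ℕ) (hmeas : ∀ n, Measurable (ξ n))
    (hind : iIndepFun ξ P) (hmap : ∀ n, P.map (ξ n) = μ)
    (X₀ : Config) (k : ℤ) (q s m : ℕ) (c : ℕ∞) :
    P (Ev ξ X₀ k q s m c) = P (Aset ξ X₀ k s m c) * μ {x : ℕ | q ≤ x ∧ (x:ℕ∞) ≤ c} := by
  have hdisj : Disjoint (Finset.range s) ({s} : Finset ℕ) := by simp
  have h1 : IndepFun (fun ω (i : ↥(Finset.range s)) => ξ i ω)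
      (fun ω (i : ↥({s} : Finset ℕ)) => ξ i ω) P :=
    hind.indepFun_finset (Finset.range s) {s} hdisj hmeas
  have h2 : IndepFun (fun ω (i : ↥(Finset.range s)) => ξ i ω) (ξ s) P :=
    h1.comp measurable_id (measurable_pi_apply (⟨s, by simp⟩ : ↥({s} : Finset ℕ)))
  rw [Ev, Aset_eq_preimage]
  rw [h2.measure_inter_preimage_eq_mul _ _ ((Set.to_countable _).measurableSet)
    MeasurableSet.of_discrete]
  congr 1
  rw [← hmap s, Measure.map_apply (hmeas s) MeasurableSet.of_discrete]

lemma Ev_one_disjoint (ξ : ℕ → Ω → ℕ) (X₀ : Config) {M : ℤ}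
    (hM : ∀ j, X₀ j ≠ 0 → j ≤ M) (k : ℤ) (m : ℕ) :
    Pairwise (Function.onFun Disjoint (fun p : ℕ × ℕ∞ => Ev ξ X₀ k 1 p.1 m p.2)) := by
  intro p p' hne
  rw [Function.onFun]
  rw [Set.disjoint_left]
  intro ω h h'
  obtain ⟨⟨hN, hT⟩, hB⟩ := h
  obtain ⟨⟨hN', hT'⟩, hB'⟩ := h'
  simp only [Set.mem_preimage, Set.mem_setOf_eq] at hB hB'
  rcases lt_trichotomy p.1 p'.1 with hlt | heq | hgt
  · have hland : Landing X₀ (fun i => ξ i ω) k p.1 :=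
      landing_of_le X₀ _ k hM hB.1 (hT ▸ hB.2)
    have := Nland_strict_mono X₀ (fun i => ξ i ω) k hlt hland
    omega
  · apply hne
    have : p.2 = p'.2 := by rw [← hT, ← hT']; rw [heq]
    exact Prod.ext heq this
  · have hland : Landing X₀ (fun i => ξ i ω) k p'.1 :=
      landing_of_le X₀ _ k hM hB'.1 (hT' ▸ hB'.2)
    have := Nland_strict_mono X₀ (fun i => ξ i ω) k hgt hland
    omega

lemma Fev_bound (P : Measure Ω) [IsProbabilityMeasure P] (μ : Measure ℕ)
    [IsProbabilityMeasure μ] (hμ0 : μ {0} = 0)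
    (ξ : ℕ → Ω → ℕ) (hmeas : ∀ n, Measurable (ξ n))
    (hind : iIndepFun ξ P) (hmap : ∀ n, P.map (ξ n) = μ)
    (X₀ : Config) {M : ℤ} (hM : ∀ j, X₀ j ≠ 0 → j ≤ M) (k : ℤ) (t0 m : ℕ)
    (htail : tailμ μ (t0 + m + 1) ≤ 1/2) :
    P (Fev ξ X₀ k t0 m) ≤ 2 * tailμ μ (t0 + m + 1) := by
  set q := t0 + m + 1 with hq
  calc P (Fev ξ X₀ k t0 m) ≤ ∑' p : ℕ × ℕ∞, P (Ev ξ X₀ k q p.1 m p.2) :=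
        measure_iUnion_le _
    _ ≤ ∑' p : ℕ × ℕ∞, 2 * tailμ μ q * P (Ev ξ X₀ k 1 p.1 m p.2) := by
        refine ENNReal.tsum_le_tsum fun p => ?_
        rw [Ev_measure P μ ξ hmeas hind hmap, Ev_measure P μ ξ hmeas hind hmap]
        calc P (Aset ξ X₀ k p.1 m p.2) * μ {x : ℕ | q ≤ x ∧ (x:ℕ∞) ≤ p.2}
            ≤ P (Aset ξ X₀ k p.1 m p.2) *
              (2 * tailμ μ q * μ {x : ℕ | 1 ≤ x ∧ (x:ℕ∞) ≤ p.2}) := by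
              refine mul_le_mul_right ?_ _
              exact window_bound μ hμ0 (by omega) htail p.2
          _ = 2 * tailμ μ q * (P (Aset ξ X₀ k p.1 m p.2) * μ {x : ℕ | 1 ≤ x ∧ (x:ℕ∞) ≤ p.2}) := by
              ring
    _ = 2 * tailμ μ q * ∑' p : ℕ × ℕ∞, P (Ev ξ X₀ k 1 p.1 m p.2) := ENNReal.tsum_mul_left
    _ = 2 * tailμ μ q * P (⋃ p : ℕ × ℕ∞, Ev ξ X₀ k 1 p.1 m p.2) := by
        rw [measure_iUnion (Ev_one_disjoint ξ X₀ hM k m)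
          (fun p => Ev_measurable ξ hmeas X₀ k 1 p.1 m p.2)]
    _ ≤ 2 * tailμ μ q * 1 := by
        refine mul_le_mul_right prob_le_one _
    _ = 2 * tailμ μ q := mul_one _

lemma receipt_mem_Fev (ξ : ℕ → Ω → ℕ) (X₀ : Config) (k : ℤ) (t0 : ℕ)
    (ht0 : tailSum X₀ k = (t0 : ℕ∞)) {ω : Ω} {s : ℕ}
    (hR : Receipt X₀ (fun i => ξ i ω) k s) :
    ω ∈ Fev ξ X₀ k t0 (Nland X₀ (fun i => ξ i ω) k s) := by
  set a := fun i => ξ i ω with ha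
  set m := Nland X₀ a k s with hm
  set c := tailSum (ibm X₀ a s) (k-1) with hc
  refine Set.mem_iUnion.2 ⟨(s, c), ⟨⟨rfl, rfl⟩, ?_⟩⟩
  simp only [Set.mem_preimage, Set.mem_setOf_eq]
  have hks : ¬ (a s : ℕ∞) ≤ tailSum (ibm X₀ a s) k := hR.2
  rw [tailSum_ibm, ht0] at hks
  have hgt : ((t0 + m : ℕ) : ℕ∞) < (a s : ℕ∞) := by
    push_cast
    exact lt_of_not_ge hks
  have hgt' : t0 + m < a s := by exact_mod_cast hgt
  have hsa : a s = ξ s ω := rfl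
  rw [← hsa]
  exact ⟨by omega, hR.1⟩

end Main

end IBMaux

/-- If `∑ n μ(n) < ∞`, then for any initial configuration `X₀ ∈ 𝒮` and any
`k ∈ ℤ` with `X₀(k) < ∞`, the IBM(μ) started from `X₀` satisfies `X_∞(k) < ∞` a.s. -/
theorem stmt0 {Ω : Type*} [MeasurableSpace Ω] (P : Measure Ω) [IsProbabilityMeasure P]
    (μ : Measure ℕ) [IsProbabilityMeasure μ] (hμ0 : μ {0} = 0)
    (ξ : ℕ → Ω → ℕ) (hξ : IsIIDSeq P μ ξ)
    (hmom : ∑' n : ℕ, (n : ℝ≥0∞) * μ {n} < ⊤)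
    (X₀ : Config) (hX₀ : IsConfig X₀) (k : ℤ) (hk : X₀ k < ⊤) :
    ∀ᵐ ω ∂P, ibmLimit X₀ (fun i => ξ i ω) k < ⊤ := by
  obtain ⟨hmeas, hind, hmap⟩ := hξ
  obtain ⟨M, hM⟩ := hX₀.2
  by_cases htop : tailSum X₀ k = ⊤
  · refine Filter.Eventually.of_forall fun ω => ?_
    rw [IBMaux.ibmLimit_of_top X₀ (fun i => ξ i ω) k htop]
    exact hk
  · obtain ⟨t0, ht0'⟩ := WithTop.ne_top_iff_exists.1 htop
    have ht0 : tailSum X₀ k = (t0 : ℕ∞) := ht0'.symm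
    have hmom' : ∑' m : ℕ, tailμ μ (m+1) ≠ ⊤ := by
      rw [IBMaux.tsum_tailμ_le]
      exact hmom.ne
    obtain ⟨m₀, hm₀⟩ := IBMaux.exists_tail_small μ hmom' t0
    have hsum : ∑' m : ℕ, P (IBMaux.Fev ξ X₀ k t0 m) ≠ ⊤ := by
      have hb : ∀ m : ℕ, P (IBMaux.Fev ξ X₀ k t0 m)
          ≤ (if m < m₀ then 1 else 0) + 2 * tailμ μ (t0+m+1) := by
        intro m
        by_cases hm : m < m₀
        · rw [if_pos hm]
          exact le_trans prob_le_one le_self_add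
        · rw [if_neg hm, zero_add]
          exact IBMaux.Fev_bound P μ hμ0 ξ hmeas hind hmap X₀ hM k t0 m (hm₀ m (not_lt.1 hm))
      refine ne_top_of_le_ne_top ?_ (ENNReal.tsum_le_tsum hb)
      rw [ENNReal.tsum_add]
      refine ENNReal.add_ne_top.2 ⟨?_, ?_⟩
      · rw [tsum_eq_sum (s := Finset.range m₀)
          (fun m hm => if_neg (by simp only [Finset.mem_range] at hm; omega))]
        rw [Finset.sum_congr rfl
          (fun m hm => if_pos (by simp only [Finset.mem_range] at hm; omega))]
        rw [Finset.sum_const, Finset.card_range]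
        simp
      · rw [ENNReal.tsum_mul_left]
        refine ENNReal.mul_ne_top (by norm_num) ?_
        exact ne_top_of_le_ne_top hmom'
          (ENNReal.tsum_le_tsum fun m => IBMaux.tailμ_anti μ (by omega))
    have hae := MeasureTheory.ae_finite_setOf_mem (μ := P)
      (s := fun m => IBMaux.Fev ξ X₀ k t0 m) hsum
    filter_upwards [hae] with ω hfin
    set a := fun i => ξ i ω with ha
    set m₁ := (hfin.toFinset.sup id) + 1 with hm₁
    have hbound : ∀ s, IBMaux.Receipt X₀ a k s → IBMaux.Nland X₀ a k s < m₁ := by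
      intro s hR
      have hmem : IBMaux.Nland X₀ a k s ∈ hfin.toFinset := by
        rw [Set.Finite.mem_toFinset]
        exact IBMaux.receipt_mem_Fev ξ X₀ k t0 ht0 hR
      have hle : IBMaux.Nland X₀ a k s ≤ hfin.toFinset.sup id :=
        Finset.le_sup (f := id) hmem
      omega
    have hle := IBMaux.ibmLimit_le_of_bound X₀ a k hbound
    have hlt : X₀ k + (m₁:ℕ∞) < ⊤ := by
      rw [ENat.add_lt_top]
      exact ⟨hk, ENat.coe_lt_top m₁⟩
    exact lt_of_le_of_lt hle hlt
end

section
/- Fix a configuration X₀ ∈ 𝒮 and k ∈ ℕ such that k ≤ ∑_{j∈ℤ} X₀(j). Then the total number R_k of children (over all times) of the k-th rightmost ball of X₀ in the IBM(μ) satisfies E(R_k) ≤ ∑_{ℓ=k}^∞ μ(ℓ)/μ({1,...,ℓ}) < ∞, with the convention 0/0 = 0 when μ({1,...,ℓ}) = 0. -/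
open MeasureTheory ProbabilityTheory Filter Set
open scoped ENNReal Topology Classical

/-- A ball is added when `Phi ξ` is applied to `X`, i.e. `B(X, ξ) > -∞`. -/
noncomputable def ballAdded (X : Config) (ξ : ℕ) : Prop := ∃ j : ℤ, (ξ : ℕ∞) ≤ tailSum X j

/-- The rank, in the new configuration `Phi ξ X`, of the ball added to `X` by `Phi ξ`:
it is placed on top of bin `J = B(X,ξ) + 1` and receives rank `∑_{i ≥ J} X i + 1`.
(When no ball is added this `iSup` over an empty type is `0`, an unused junk value.) -/
noncomputable def newRank (X : Config) (ξ : ℕ) : ℕ∞ :=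
  ⨆ j : {j : ℤ // (ξ : ℕ∞) ≤ tailSum X (j - 1) ∧ ¬ (ξ : ℕ∞) ≤ tailSum X j},
    tailSum X (j : ℤ) + 1

/-- The rank at time `n` of the ball which is the `k`-th rightmost ball of `X₀`: each ball
keeps its location and height, and its rank increases by `1` exactly when a ball with a
smaller or equal rank is added. -/
noncomputable def rankProc (X₀ : Config) (k : ℕ) (ξ : ℕ → ℕ) : ℕ → ℕ∞
  | 0 => (k : ℕ∞)
  | n + 1 =>
      if ballAdded (ibm X₀ ξ n) (ξ n) ∧ newRank (ibm X₀ ξ n) (ξ n) ≤ rankProc X₀ k ξ n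
      then rankProc X₀ k ξ n + 1 else rankProc X₀ k ξ n

/-- The total number of children, over all times, of the `k`-th rightmost ball of `X₀`:
the ball added at time `n+1` is a child of the ball of rank `ξ n` in `X_n`. -/
noncomputable def totalChildren (X₀ : Config) (k : ℕ) (ξ : ℕ → ℕ) : ℝ≥0∞ :=
  ∑' n : ℕ, (if ballAdded (ibm X₀ ξ n) (ξ n) ∧ ((ξ n : ℕ∞) = rankProc X₀ k ξ n)
    then 1 else 0)


/-! ### Auxiliary lemmas -/

section Aux

open Finset in
lemma tailSum_anti' (X : Config) {j j' : ℤ} (h : j ≤ j') : tailSum X j' ≤ tailSum X j := by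
  refine iSup_le fun m => le_iSup_of_le m ?_
  exact Finset.sum_le_sum_of_subset (Finset.Icc_subset_Icc_left h)

lemma tailSum_mono' {X Y : Config} (h : ∀ i, X i ≤ Y i) (j : ℤ) :
    tailSum X j ≤ tailSum Y j := by
  refine iSup_le fun m => le_iSup_of_le m ?_
  exact Finset.sum_le_sum fun i _ => h i

lemma le_phi' (ξ : ℕ) (X : Config) (j : ℤ) : X j ≤ Phi ξ X j := le_self_add

/-- support bounded above -/
def SuppBdd (X : Config) : Prop := ∃ M : ℤ, ∀ j, M < j → X j = 0

lemma tailSum_eq_zero' {X : Config} {M : ℤ} (hM : ∀ i, M < i → X i = 0) {j : ℤ} (hj : M < j) :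
    tailSum X j = 0 := by
  refine le_antisymm (iSup_le fun m => ?_) zero_le
  rw [Finset.sum_eq_zero]
  intro i hi
  exact hM i (lt_of_lt_of_le hj (Finset.mem_Icc.mp hi).1)

lemma suppBdd_phi {X : Config} (h : SuppBdd X) (ξ : ℕ) : SuppBdd (Phi ξ X) := by
  obtain ⟨M, hM⟩ := h
  refine ⟨M + 1, fun j hj => ?_⟩
  have h1 : X j = 0 := hM j (by omega)
  have h2 : tailSum X (j - 1) = 0 := tailSum_eq_zero' hM (by omega)
  simp only [Phi, h1, h2, zero_add]
  rw [if_neg]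
  rintro ⟨h3, h4⟩
  exact h4 (le_trans h3 zero_le)

lemma ibm_succ (X₀ : Config) (ξ : ℕ → ℕ) (n : ℕ) :
    ibm X₀ ξ (n + 1) = Phi (ξ n) (ibm X₀ ξ n) := rfl

lemma suppBdd_ibm {X₀ : Config} (h : SuppBdd X₀) (ξ : ℕ → ℕ) (n : ℕ) :
    SuppBdd (ibm X₀ ξ n) := by
  induction n with
  | zero => exact h
  | succ n ih => exact suppBdd_phi ih _

lemma exists_tailSum_ge {X : Config} {ξ : ℕ} (hξ : 1 ≤ ξ)
    (h : (ξ : ℕ∞) ≤ ⨆ j : ℤ, tailSum X j) : ∃ j, (ξ : ℕ∞) ≤ tailSum X j := by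
  have h1 : ((ξ - 1 : ℕ) : ℕ∞) < ⨆ j : ℤ, tailSum X j := by
    refine lt_of_lt_of_le ?_ h
    exact Nat.cast_lt.mpr (Nat.sub_lt hξ one_pos)
  obtain ⟨j, hj⟩ := lt_iSup_iff.mp h1
  refine ⟨j, ?_⟩
  have h2 := ENat.add_one_le_iff (n := tailSum X j) (by simp) |>.mpr hj
  calc (ξ : ℕ∞) = ((ξ - 1 : ℕ) : ℕ∞) + 1 := by norm_cast; omega
    _ ≤ tailSum X j := h2

lemma exists_crossing {X : Config} (hX : SuppBdd X) {ξ : ℕ} (hξ : 1 ≤ ξ)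
    (h : ∃ j, (ξ : ℕ∞) ≤ tailSum X j) :
    ∃ J : ℤ, (ξ : ℕ∞) ≤ tailSum X (J - 1) ∧ ¬ (ξ : ℕ∞) ≤ tailSum X J := by
  obtain ⟨M, hM⟩ := hX
  have hbdd : ∀ z : ℤ, (ξ : ℕ∞) ≤ tailSum X z → z ≤ M := by
    intro z hz
    by_contra hc
    rw [tailSum_eq_zero' hM (by omega)] at hz
    simp at hz; omega
  obtain ⟨j₀, hj₀, hmax⟩ := Int.exists_greatest_of_bdd ⟨M, hbdd⟩ h
  refine ⟨j₀ + 1, by simpa using hj₀, fun hc => ?_⟩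
  have := hmax _ hc
  omega

lemma newRank_le (X : Config) (ξ : ℕ) : newRank X ξ ≤ (ξ : ℕ∞) := by
  refine iSup_le fun ⟨j, hj1, hj2⟩ => ?_
  have hlt : tailSum X j < (ξ : ℕ∞) := lt_of_not_ge hj2
  exact ENat.add_one_le_iff (ne_top_of_lt hlt) |>.mpr hlt

lemma tailSum_phi_succ {X : Config} {ξ : ℕ} {J : ℤ}
    (hJ : (ξ : ℕ∞) ≤ tailSum X (J - 1) ∧ ¬ (ξ : ℕ∞) ≤ tailSum X J)
    {j : ℤ} (hj : j ≤ J) : tailSum X j + 1 ≤ tailSum (Phi ξ X) j := by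
  have key : ∀ m : ℤ, J ≤ m → ∑ i ∈ Finset.Icc j m, X i + 1 ≤ tailSum (Phi ξ X) j := by
    intro m hm
    have hmem : J ∈ Finset.Icc j m := Finset.mem_Icc.mpr ⟨hj, hm⟩
    have heq : ∑ i ∈ Finset.Icc j m, Phi ξ X i = ∑ i ∈ Finset.Icc j m, X i + 1 := by
      simp only [Phi, Finset.sum_add_distrib]
      congr 1
      rw [Finset.sum_eq_single J]
      · rw [if_pos hJ]
      · intro b _ hb
        rw [if_neg]
        rintro ⟨h1, h2⟩
        rcases lt_trichotomy b J with h | h | h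
        · refine h2 (le_trans hJ.1 ?_)
          refine iSup_le fun m' => le_iSup_of_le m' (Finset.sum_le_sum_of_subset ?_)
          exact Finset.Icc_subset_Icc_left (by omega)
        · exact hb h
        · refine hJ.2 (le_trans h1 ?_)
          refine iSup_le fun m' => le_iSup_of_le m' (Finset.sum_le_sum_of_subset ?_)
          exact Finset.Icc_subset_Icc_left (by omega)
      · intro h; exact absurd hmem h
    calc ∑ i ∈ Finset.Icc j m, X i + 1 = ∑ i ∈ Finset.Icc j m, Phi ξ X i := heq.symm
      _ ≤ tailSum (Phi ξ X) j := le_iSup (fun m => ∑ i ∈ Finset.Icc j m, Phi ξ X i) m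
  rcases eq_top_or_lt_top (tailSum X j) with htop | hfin
  · have hle : tailSum X j ≤ tailSum (Phi ξ X) j := by
      refine iSup_le fun m => le_iSup_of_le m (Finset.sum_le_sum fun i _ => le_self_add)
    rw [htop] at hle ⊢
    rw [top_add]
    exact le_antisymm le_top hle |>.ge
  · obtain ⟨t, ht⟩ := WithTop.ne_top_iff_exists.mp hfin.ne
    replace ht := ht.symm
    have hex : ∃ m, (t : ℕ∞) ≤ ∑ i ∈ Finset.Icc j m, X i := by
      rcases Nat.eq_zero_or_pos t with h0 | hpos
      · exact ⟨j, by simp [h0]⟩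
      · have h1 : ((t - 1 : ℕ) : ℕ∞) < tailSum X j := by
          rw [ht]; exact Nat.cast_lt.mpr (Nat.sub_lt hpos one_pos)
        obtain ⟨m, hm⟩ := lt_iSup_iff.mp h1
        refine ⟨m, ?_⟩
        have h2 := ENat.add_one_le_iff (n := ∑ i ∈ Finset.Icc j m, X i) (by simp) |>.mpr hm
        calc (t : ℕ∞) = ((t - 1 : ℕ) : ℕ∞) + 1 := by norm_cast; omega
          _ ≤ _ := h2
    obtain ⟨m, hm⟩ := hex
    have hm' : (t : ℕ∞) ≤ ∑ i ∈ Finset.Icc j (max m J), X i :=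
      hm.trans (Finset.sum_le_sum_of_subset (Finset.Icc_subset_Icc_right (le_max_left _ _)))
    calc tailSum X j + 1 = (t : ℕ∞) + 1 := congrArg (· + 1) ht
      _ ≤ ∑ i ∈ Finset.Icc j (max m J), X i + 1 := add_le_add_left hm' 1
      _ ≤ tailSum (Phi ξ X) j := key _ (le_max_right _ _)

variable {X₀ : Config} {k : ℕ} {ξ : ℕ → ℕ}

lemma rank_le_succ (n : ℕ) : rankProc X₀ k ξ n ≤ rankProc X₀ k ξ (n + 1) := by
  rw [rankProc]
  split_ifs
  · exact le_self_add
  · exact le_rfl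

lemma rank_mono {m n : ℕ} (h : m ≤ n) : rankProc X₀ k ξ m ≤ rankProc X₀ k ξ n := by
  induction h with
  | refl => exact le_rfl
  | step h ih => exact ih.trans (rank_le_succ _)

lemma rank_invariant (hξ : ∀ m, 1 ≤ ξ m) (hX : SuppBdd X₀)
    (hk : ∃ j, (k : ℕ∞) ≤ tailSum X₀ j) (n : ℕ) :
    ∃ j, rankProc X₀ k ξ n ≤ tailSum (ibm X₀ ξ n) j := by
  induction n with
  | zero => exact hk
  | succ n ih =>
    obtain ⟨j₀, hj₀⟩ := ih
    rw [rankProc, ibm_succ]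
    by_cases c : ballAdded (ibm X₀ ξ n) (ξ n) ∧ newRank (ibm X₀ ξ n) (ξ n) ≤ rankProc X₀ k ξ n
    · rw [if_pos c]
      obtain ⟨J, hJ⟩ := exists_crossing (suppBdd_ibm hX ξ n) (hξ n) c.1
      refine ⟨min j₀ J, ?_⟩
      calc rankProc X₀ k ξ n + 1 ≤ tailSum (ibm X₀ ξ n) (min j₀ J) + 1 :=
            add_le_add_left (hj₀.trans (tailSum_anti' _ (min_le_left _ _))) 1
        _ ≤ tailSum (Phi (ξ n) (ibm X₀ ξ n)) (min j₀ J) := tailSum_phi_succ hJ (min_le_right _ _)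
    · rw [if_neg c]
      exact ⟨j₀, hj₀.trans (tailSum_mono' (le_phi' _ _) _)⟩

lemma rank_incr (hξ : ∀ m, 1 ≤ ξ m) (hX : SuppBdd X₀)
    (hk : ∃ j, (k : ℕ∞) ≤ tailSum X₀ j) {n ℓ : ℕ}
    (hr : rankProc X₀ k ξ n = (ℓ : ℕ∞)) (h2 : ξ n ≤ ℓ) :
    rankProc X₀ k ξ (n + 1) = (ℓ : ℕ∞) + 1 := by
  obtain ⟨j, hj⟩ := rank_invariant hξ hX hk n
  rw [hr] at hj
  have hba : ballAdded (ibm X₀ ξ n) (ξ n) := ⟨j, le_trans (Nat.cast_le.mpr h2) hj⟩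
  have hnr : newRank (ibm X₀ ξ n) (ξ n) ≤ rankProc X₀ k ξ n := by
    rw [hr]; exact (newRank_le _ _).trans (Nat.cast_le.mpr h2)
  rw [rankProc, if_pos ⟨hba, hnr⟩, hr]

lemma at_most_once (hξ : ∀ m, 1 ≤ ξ m) (hX : SuppBdd X₀)
    (hk : ∃ j, (k : ℕ∞) ≤ tailSum X₀ j) {ℓ : ℕ} {n m : ℕ}
    (hn : rankProc X₀ k ξ n = (ℓ : ℕ∞) ∧ ξ n ≤ ℓ)
    (hm : rankProc X₀ k ξ m = (ℓ : ℕ∞) ∧ ξ m ≤ ℓ) : n = m := by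
  by_contra hne
  wlog hlt : n < m generalizing n m
  · exact this hm hn (Ne.symm hne) (by omega)
  have h1 := rank_incr hξ hX hk hn.1 hn.2
  have h2 : rankProc X₀ k ξ (n + 1) ≤ rankProc X₀ k ξ m := rank_mono hlt
  rw [h1, hm.1] at h2
  exact absurd (ENat.add_one_le_iff (by simp) |>.mp h2) (lt_irrefl _)

lemma tsum_ite_le_one {Q : ℕ → Prop} (h : ∀ n m, Q n → Q m → n = m) :
    ∑' n, (if Q n then (1 : ℝ≥0∞) else 0) ≤ 1 := by
  by_cases hex : ∃ n, Q n
  · obtain ⟨n₀, h₀⟩ := hex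
    calc ∑' n, (if Q n then (1 : ℝ≥0∞) else 0)
        ≤ ∑' n, (if n = n₀ then (1 : ℝ≥0∞) else 0) := by
          refine ENNReal.tsum_le_tsum fun n => ?_
          by_cases h1 : Q n
          · rw [if_pos h1, if_pos (h n n₀ h1 h₀)]
          · rw [if_neg h1]; exact zero_le
      _ = 1 := by rw [tsum_ite_eq]
  · push_neg at hex
    simp [hex]

/-! ### Dependence of the processes on finitely many coordinates -/

lemma ibm_congr {X₀ : Config} {ξ ξ' : ℕ → ℕ} :
    ∀ n, (∀ i, i < n → ξ i = ξ' i) → ibm X₀ ξ n = ibm X₀ ξ' n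
  | 0, _ => rfl
  | n + 1, h => by
    rw [ibm_succ, ibm_succ, ibm_congr n (fun i hi => h i (by omega)), h n (by omega)]

lemma rank_congr {X₀ : Config} {k : ℕ} {ξ ξ' : ℕ → ℕ} :
    ∀ n, (∀ i, i < n → ξ i = ξ' i) → rankProc X₀ k ξ n = rankProc X₀ k ξ' n
  | 0, _ => rfl
  | n + 1, h => by
    have h1 : ∀ i, i < n → ξ i = ξ' i := fun i hi => h i (by omega)
    rw [rankProc, rankProc, rank_congr n h1, ibm_congr n h1, h n (by omega)]

/-! ### Measurability in countable products -/

lemma measurableSet_pi_nat {n : ℕ} (s : Set ({x // x ∈ Finset.range n} → ℕ)) :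
    MeasurableSet s :=
  (Set.to_countable s).measurableSet

/-- extend a vector on `range n` to a full sequence by `1` -/
def extSeq {n : ℕ} (v : {x // x ∈ Finset.range n} → ℕ) : ℕ → ℕ :=
  fun i => if h : i ∈ Finset.range n then v ⟨i, h⟩ else 1

section Indep

variable {Ω : Type*} [MeasurableSpace Ω] {P : Measure Ω} {μ : Measure ℕ} {ξ : ℕ → Ω → ℕ}

/-- projection of the driving sequence to the first `n` coordinates -/
def gmap (ξ : ℕ → Ω → ℕ) (n : ℕ) : Ω → ({x // x ∈ Finset.range n} → ℕ) :=
  fun ω i => ξ i ω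

lemma gmap_meas (hm : ∀ i, Measurable (ξ i)) (n : ℕ) : Measurable (gmap ξ n) :=
  measurable_pi_lambda _ (fun i => hm i)

lemma extSeq_gmap {n : ℕ} (ω : Ω) (i : ℕ) (hi : i < n) :
    extSeq (gmap ξ n ω) i = ξ i ω := by
  rw [extSeq, dif_pos (Finset.mem_range.mpr hi)]
  rfl

lemma indep_key (hξ : IsIIDSeq P μ ξ) (n : ℕ)
    (B : Set ({x // x ∈ Finset.range n} → ℕ)) (s : Set ℕ) :
    P (gmap ξ n ⁻¹' B ∩ ξ n ⁻¹' s) = P (gmap ξ n ⁻¹' B) * μ s := by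
  have hd : Disjoint (Finset.range n) ({n} : Finset ℕ) := by simp
  have h := hξ.2.1.indepFun_finset (Finset.range n) {n} hd hξ.1
  have h2 : IndepFun (gmap ξ n) (ξ n) P := by
    have hcomp := h.comp (measurable_id)
      (measurable_pi_apply (⟨n, by simp⟩ : {x // x ∈ ({n} : Finset ℕ)}))
    exact hcomp
  rw [h2.measure_inter_preimage_eq_mul B s (measurableSet_pi_nat B)
      ((Set.to_countable s).measurableSet)]
  congr 1
  rw [← hξ.2.2 n, Measure.map_apply (hξ.1 n) ((Set.to_countable s).measurableSet)]

end Indep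

end Aux
/-- If `k ≤ ∑_j X₀(j)` then the expected total number `R_k` of children of
the `k`-th rightmost ball of `X₀` satisfies
`E(R_k) ≤ ∑_{ℓ ≥ k} μ(ℓ)/μ(⟦1,ℓ⟧) < ∞` (with the convention `0/0 = 0`). -/
theorem stmt8 {Ω : Type*} [MeasurableSpace Ω] (P : Measure Ω) [IsProbabilityMeasure P]
    (μ : Measure ℕ) [IsProbabilityMeasure μ] (hμ0 : μ {0} = 0)
    (ξ : ℕ → Ω → ℕ) (hξ : IsIIDSeq P μ ξ)
    (X₀ : Config) (hX₀ : IsConfig X₀)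
    (k : ℕ) (hk1 : 1 ≤ k) (hk : (k : ℕ∞) ≤ ⨆ j : ℤ, tailSum X₀ j) :
    (∫⁻ ω, totalChildren X₀ k (fun i => ξ i ω) ∂P) ≤
        ∑' ℓ : ℕ, (if k ≤ ℓ then μ {ℓ} / μ (Set.Icc 1 ℓ) else 0) ∧
      ∑' ℓ : ℕ, (if k ≤ ℓ then μ {ℓ} / μ (Set.Icc 1 ℓ) else 0) < ⊤ := by
  classical
  have hmeas := hξ.1
  have hXb : SuppBdd X₀ := by
    obtain ⟨M, hM⟩ := hX₀.2
    refine ⟨M, fun j hj => ?_⟩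
    by_contra hc
    exact absurd (hM j hc) (by omega)
  have hkex : ∃ j, (k : ℕ∞) ≤ tailSum X₀ j := exists_tailSum_ge hk1 hk
  -- the events
  let A : ℕ → ℕ → Set Ω := fun n ℓ =>
    gmap ξ n ⁻¹' ((fun v => rankProc X₀ k (extSeq v) n) ⁻¹' {(ℓ : ℕ∞)})
  have hA : ∀ n ℓ (ω : Ω), ω ∈ A n ℓ ↔ rankProc X₀ k (fun i => ξ i ω) n = (ℓ : ℕ∞) := by
    intro n ℓ ω
    simp only [A, Set.mem_preimage, Set.mem_singleton_iff]
    rw [rank_congr n (fun i hi => extSeq_gmap ω i hi)]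
  have hAmeas : ∀ n ℓ, MeasurableSet (A n ℓ) := fun n ℓ =>
    gmap_meas hmeas n (measurableSet_pi_nat _)
  let E : ℕ → Set Ω := fun n =>
    {ω | ballAdded (ibm X₀ (fun i => ξ i ω) n) (ξ n ω) ∧
      ((ξ n ω : ℕ∞) = rankProc X₀ k (fun i => ξ i ω) n)}
  have hEmeas : ∀ n, MeasurableSet (E n) := by
    intro n
    have hEeq : E n = gmap ξ (n + 1) ⁻¹'
        {v | ballAdded (ibm X₀ (extSeq v) n) (extSeq v n) ∧
          ((extSeq v n : ℕ∞) = rankProc X₀ k (extSeq v) n)} := by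
      ext ω
      simp only [E, Set.mem_setOf_eq, Set.mem_preimage]
      rw [ibm_congr n (fun i hi => extSeq_gmap ω i (by omega)),
          rank_congr n (fun i hi => extSeq_gmap ω i (by omega)),
          extSeq_gmap ω n (by omega)]
    rw [hEeq]
    exact gmap_meas hmeas (n + 1) (measurableSet_pi_nat _)
  -- the LHS equals the sum of the probabilities of the events E n
  have hlhs : ∫⁻ ω, totalChildren X₀ k (fun i => ξ i ω) ∂P = ∑' n, P (E n) := by
    have hpt : ∀ ω : Ω, totalChildren X₀ k (fun i => ξ i ω) =
        ∑' n, (E n).indicator (fun _ => (1 : ℝ≥0∞)) ω := by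
      intro ω
      rw [totalChildren]
      refine tsum_congr fun n => ?_
      by_cases hc : ballAdded (ibm X₀ (fun i => ξ i ω) n) (ξ n ω) ∧
          ((ξ n ω : ℕ∞) = rankProc X₀ k (fun i => ξ i ω) n)
      · rw [if_pos hc, Set.indicator_of_mem (show ω ∈ E n from hc)]
      · rw [if_neg hc, Set.indicator_of_notMem (show ω ∉ E n from hc)]
    calc ∫⁻ ω, totalChildren X₀ k (fun i => ξ i ω) ∂P
        = ∫⁻ ω, ∑' n, (E n).indicator (fun _ => (1 : ℝ≥0∞)) ω ∂P := lintegral_congr hpt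
      _ = ∑' n, ∫⁻ ω, (E n).indicator (fun _ => (1 : ℝ≥0∞)) ω ∂P :=
          lintegral_tsum fun n => (measurable_const.indicator (hEmeas n)).aemeasurable
      _ = ∑' n, P (E n) := tsum_congr fun n => lintegral_indicator_one (hEmeas n)
  -- per-time bound
  have hstep1 : ∀ n, P (E n) ≤ ∑' ℓ : ℕ, (if k ≤ ℓ then P (A n ℓ ∩ ξ n ⁻¹' {ℓ}) else 0) := by
    intro n
    have hsub : E n ⊆ ⋃ ℓ : ℕ, (if k ≤ ℓ then A n ℓ ∩ ξ n ⁻¹' {ℓ} else ∅) := by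
      rintro ω ⟨hba, hrk⟩
      refine Set.mem_iUnion.mpr ⟨ξ n ω, ?_⟩
      have hkle : k ≤ ξ n ω := by
        have h0 : (k : ℕ∞) ≤ rankProc X₀ k (fun i => ξ i ω) n :=
          rank_mono (Nat.zero_le n)
        rw [← hrk] at h0
        exact_mod_cast h0
      rw [if_pos hkle]
      exact ⟨(hA n (ξ n ω) ω).mpr hrk.symm, rfl⟩
    calc P (E n) ≤ P (⋃ ℓ : ℕ, (if k ≤ ℓ then A n ℓ ∩ ξ n ⁻¹' {ℓ} else ∅)) :=
          measure_mono hsub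
      _ ≤ ∑' ℓ : ℕ, P (if k ≤ ℓ then A n ℓ ∩ ξ n ⁻¹' {ℓ} else ∅) := measure_iUnion_le _
      _ = ∑' ℓ : ℕ, (if k ≤ ℓ then P (A n ℓ ∩ ξ n ⁻¹' {ℓ}) else 0) := by
          refine tsum_congr fun ℓ => ?_
          split_ifs
          · rfl
          · exact measure_empty
  -- independence
  have hAint : ∀ n ℓ (s : Set ℕ), P (A n ℓ ∩ ξ n ⁻¹' s) = P (A n ℓ) * μ s := fun n ℓ s =>
    indep_key hξ n ((fun v => rankProc X₀ k (extSeq v) n) ⁻¹' {(ℓ : ℕ∞)}) s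
  -- the geometric series bound
  have hgeo : ∀ ℓ : ℕ, k ≤ ℓ → (∑' n, P (A n ℓ)) * μ (Set.Icc 1 ℓ) ≤ 1 := by
    intro ℓ hkℓ
    set N : Set Ω := ⋂ m, ξ m ⁻¹' {j | 1 ≤ j} with hNdef
    have hNmeas : MeasurableSet N :=
      MeasurableSet.iInter fun m => hmeas m ((Set.to_countable _).measurableSet)
    have hNc : P Nᶜ = 0 := by
      rw [hNdef, Set.compl_iInter]
      refine measure_iUnion_null fun m => ?_
      have hc : (ξ m ⁻¹' {j | 1 ≤ j})ᶜ = ξ m ⁻¹' {0} := by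
        ext ω
        simp [Nat.lt_one_iff]
      rw [hc, ← Measure.map_apply (hmeas m) ((Set.to_countable _).measurableSet),
        hξ.2.2 m, hμ0]
    have hDmeas : ∀ n, MeasurableSet ((A n ℓ ∩ ξ n ⁻¹' Set.Icc 1 ℓ) ∩ N) := fun n =>
      ((hAmeas n ℓ).inter (hmeas n ((Set.to_countable _).measurableSet))).inter hNmeas
    have hpt : ∀ ω : Ω,
        ∑' n, ((A n ℓ ∩ ξ n ⁻¹' Set.Icc 1 ℓ) ∩ N).indicator (fun _ => (1 : ℝ≥0∞)) ω ≤ 1 := by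
      intro ω
      by_cases hωN : ω ∈ N
      · have hξ1 : ∀ m, 1 ≤ ξ m ω := fun m => Set.mem_iInter.mp hωN m
        have hQle := tsum_ite_le_one
          (Q := fun n => rankProc X₀ k (fun i => ξ i ω) n = (ℓ : ℕ∞) ∧ ξ n ω ≤ ℓ)
          (fun n m hn hm => at_most_once hξ1 hXb hkex hn hm)
        refine le_trans (ENNReal.tsum_le_tsum fun n => ?_) hQle
        by_cases hmem : ω ∈ (A n ℓ ∩ ξ n ⁻¹' Set.Icc 1 ℓ) ∩ N
        · rw [Set.indicator_of_mem hmem, if_pos]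
          exact ⟨(hA n ℓ ω).mp hmem.1.1, (hmem.1.2 : ξ n ω ∈ Set.Icc 1 ℓ).2⟩
        · rw [Set.indicator_of_notMem hmem]
          exact zero_le
      · have hz : ∀ n : ℕ, ((A n ℓ ∩ ξ n ⁻¹' Set.Icc 1 ℓ) ∩ N).indicator
            (fun _ => (1 : ℝ≥0∞)) ω = 0 := fun n =>
          Set.indicator_of_notMem (fun hc => hωN hc.2) _
        simp only [hz, tsum_zero]
        exact zero_le_one
    calc (∑' n, P (A n ℓ)) * μ (Set.Icc 1 ℓ)
        = ∑' n, P (A n ℓ) * μ (Set.Icc 1 ℓ) := ENNReal.tsum_mul_right.symm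
      _ = ∑' n, P (A n ℓ ∩ ξ n ⁻¹' Set.Icc 1 ℓ) := tsum_congr fun n => (hAint n ℓ _).symm
      _ = ∑' n, P ((A n ℓ ∩ ξ n ⁻¹' Set.Icc 1 ℓ) ∩ N) :=
          tsum_congr fun n => (measure_inter_conull hNc).symm
      _ = ∫⁻ ω, ∑' n, ((A n ℓ ∩ ξ n ⁻¹' Set.Icc 1 ℓ) ∩ N).indicator
            (fun _ => (1 : ℝ≥0∞)) ω ∂P := by
          rw [lintegral_tsum fun n => (measurable_const.indicator (hDmeas n)).aemeasurable]
          exact tsum_congr fun n => (lintegral_indicator_one (hDmeas n)).symm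
      _ ≤ ∫⁻ _, 1 ∂P := lintegral_mono hpt
      _ = 1 := by rw [lintegral_one, measure_univ]
  -- per-ℓ bound
  have key : ∀ ℓ : ℕ, k ≤ ℓ →
      (∑' n, P (A n ℓ)) * μ {ℓ} ≤ μ {ℓ} / μ (Set.Icc 1 ℓ) := by
    intro ℓ hkℓ
    have hsing : μ {ℓ} ≤ μ (Set.Icc 1 ℓ) :=
      measure_mono (Set.singleton_subset_iff.mpr ⟨hk1.trans hkℓ, le_rfl⟩)
    by_cases hm0 : μ (Set.Icc 1 ℓ) = 0
    · have h0 : μ {ℓ} = 0 := le_antisymm (hm0 ▸ hsing) zero_le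
      rw [h0, mul_zero]
      exact zero_le
    · have hS : (∑' n, P (A n ℓ)) ≤ 1 / μ (Set.Icc 1 ℓ) :=
        (ENNReal.le_div_iff_mul_le (Or.inl hm0) (Or.inl (measure_ne_top μ _))).mpr
          (hgeo ℓ hkℓ)
      calc (∑' n, P (A n ℓ)) * μ {ℓ} ≤ (1 / μ (Set.Icc 1 ℓ)) * μ {ℓ} :=
            mul_le_mul_left hS _
        _ = μ {ℓ} / μ (Set.Icc 1 ℓ) := by
            rw [one_div, mul_comm, div_eq_mul_inv]
  constructor
  · -- main bound
    calc ∫⁻ ω, totalChildren X₀ k (fun i => ξ i ω) ∂P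
        = ∑' n, P (E n) := hlhs
      _ ≤ ∑' n, ∑' ℓ : ℕ, (if k ≤ ℓ then P (A n ℓ ∩ ξ n ⁻¹' {ℓ}) else 0) :=
          ENNReal.tsum_le_tsum hstep1
      _ = ∑' ℓ : ℕ, ∑' n, (if k ≤ ℓ then P (A n ℓ ∩ ξ n ⁻¹' {ℓ}) else 0) :=
          ENNReal.tsum_comm
      _ = ∑' ℓ : ℕ, (if k ≤ ℓ then (∑' n, P (A n ℓ)) * μ {ℓ} else 0) := by
          refine tsum_congr fun ℓ => ?_
          by_cases hkℓ : k ≤ ℓ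
          · simp only [if_pos hkℓ]
            rw [← ENNReal.tsum_mul_right]
            exact tsum_congr fun n => hAint n ℓ {ℓ}
          · simp only [if_neg hkℓ, tsum_zero]
      _ ≤ ∑' ℓ : ℕ, (if k ≤ ℓ then μ {ℓ} / μ (Set.Icc 1 ℓ) else 0) := by
          refine ENNReal.tsum_le_tsum fun ℓ => ?_
          by_cases hkℓ : k ≤ ℓ
          · rw [if_pos hkℓ, if_pos hkℓ]
            exact key ℓ hkℓ
          · rw [if_neg hkℓ, if_neg hkℓ]
  · -- finiteness
    have h1 : μ {j : ℕ | 1 ≤ j} = 1 := by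
      have hcompl : {j : ℕ | 1 ≤ j} = ({0} : Set ℕ)ᶜ := by
        ext j
        simp [Nat.one_le_iff_ne_zero]
      rw [hcompl, measure_compl ((Set.to_countable _).measurableSet) (measure_ne_top μ _),
        hμ0, measure_univ, tsub_zero]
    have hex : ∃ N₀ : ℕ, μ (Set.Icc 1 N₀) ≠ 0 := by
      by_contra hc
      push_neg at hc
      have hun : {j : ℕ | 1 ≤ j} = ⋃ n : ℕ, Set.Icc 1 n := by
        ext j
        simp only [Set.mem_setOf_eq, Set.mem_iUnion, Set.mem_Icc]
        exact ⟨fun h => ⟨j, h, le_rfl⟩, fun ⟨n, h, _⟩ => h⟩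
      rw [hun, measure_iUnion_null hc] at h1
      exact one_ne_zero h1.symm
    obtain ⟨N₀, hN₀⟩ := hex
    have hbound : ∀ ℓ : ℕ, (if k ≤ ℓ then μ {ℓ} / μ (Set.Icc 1 ℓ) else 0) ≤
        (if ℓ ≤ N₀ then (1 : ℝ≥0∞) else 0) + μ {ℓ} * (μ (Set.Icc 1 N₀))⁻¹ := by
      intro ℓ
      by_cases hkℓ : k ≤ ℓ
      · rw [if_pos hkℓ]
        have hsing : μ {ℓ} ≤ μ (Set.Icc 1 ℓ) :=
          measure_mono (Set.singleton_subset_iff.mpr ⟨hk1.trans hkℓ, le_rfl⟩)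
        by_cases hle : ℓ ≤ N₀
        · rw [if_pos hle]
          refine le_trans ?_ le_self_add
          by_cases h0 : μ (Set.Icc 1 ℓ) = 0
          · have h00 : μ {ℓ} = 0 := le_antisymm (hsing.trans (le_of_eq h0)) zero_le
            rw [h00, ENNReal.zero_div]
            exact zero_le_one
          · rw [ENNReal.div_le_iff h0 (measure_ne_top μ _), one_mul]
            exact hsing
        · rw [if_neg hle]
          have hmono : μ (Set.Icc 1 N₀) ≤ μ (Set.Icc 1 ℓ) :=
            measure_mono (Set.Icc_subset_Icc_right (by omega))
          calc μ {ℓ} / μ (Set.Icc 1 ℓ) ≤ μ {ℓ} / μ (Set.Icc 1 N₀) :=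
                ENNReal.div_le_div_left hmono _
            _ = μ {ℓ} * (μ (Set.Icc 1 N₀))⁻¹ := div_eq_mul_inv _ _
            _ ≤ 0 + μ {ℓ} * (μ (Set.Icc 1 N₀))⁻¹ := le_of_eq (zero_add _).symm
      · rw [if_neg hkℓ]
        exact zero_le
    have hsum1 : ∑' ℓ : ℕ, (if ℓ ≤ N₀ then (1 : ℝ≥0∞) else 0) < ⊤ := by
      rw [tsum_eq_sum (s := Finset.range (N₀ + 1))
        (fun ℓ hℓ => if_neg (fun h => hℓ (Finset.mem_range.mpr (by omega))))]
      refine lt_of_le_of_lt (Finset.sum_le_sum (g := fun _ => (1 : ℝ≥0∞))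
        (fun i _ => by split_ifs <;> simp)) ?_
      simp only [Finset.sum_const, Finset.card_range, nsmul_eq_mul, mul_one]
      exact ENNReal.natCast_lt_top _
    have hsum2 : (∑' ℓ : ℕ, μ {ℓ}) = 1 := by
      have hdisj : Pairwise (Function.onFun Disjoint fun ℓ : ℕ => ({ℓ} : Set ℕ)) :=
        fun i j hij => Set.disjoint_singleton.mpr hij
      rw [← measure_iUnion hdisj (fun ℓ => (Set.to_countable _).measurableSet),
        Set.iUnion_of_singleton, measure_univ]
    calc ∑' ℓ : ℕ, (if k ≤ ℓ then μ {ℓ} / μ (Set.Icc 1 ℓ) else 0)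
        ≤ ∑' ℓ : ℕ, ((if ℓ ≤ N₀ then (1 : ℝ≥0∞) else 0) + μ {ℓ} * (μ (Set.Icc 1 N₀))⁻¹) :=
          ENNReal.tsum_le_tsum hbound
      _ = (∑' ℓ : ℕ, (if ℓ ≤ N₀ then (1 : ℝ≥0∞) else 0)) +
            (∑' ℓ : ℕ, μ {ℓ}) * (μ (Set.Icc 1 N₀))⁻¹ := by
          rw [ENNReal.tsum_add, ENNReal.tsum_mul_right]
      _ < ⊤ := by
          refine ENNReal.add_lt_top.mpr ⟨hsum1, ?_⟩
          rw [hsum2, one_mul]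
          exact ENNReal.inv_lt_top.mpr (pos_iff_ne_zero.mpr hN₀)
end

section
/- Let k ∈ ℤ and X₀ ∈ 𝒮 with X₀(k) < ∞. Then for any probability distribution μ on ℕ, the IBM(μ) started from X₀ satisfies {X_∞(k) = ∞} ⊆ {X_∞(k−1) = ∞} up to a null set (almost surely). -/
open MeasureTheory ProbabilityTheory Filter Set
open scoped ENNReal Topology Classical

noncomputable section Det

lemma tailSum_mono_right (X : Config) {b b' : ℤ} (h : b ≤ b') :
    tailSum X b' ≤ tailSum X b := by
  rw [tailSum, tailSum]
  refine iSup_le fun m => ?_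
  exact le_trans (Finset.sum_le_sum_of_subset (Finset.Icc_subset_Icc_left h))
    (le_iSup (fun m => ∑ i ∈ Finset.Icc b m, X i) m)

lemma le_tailSum (X : Config) (j : ℤ) : X j ≤ tailSum X j := by
  have h : X j = ∑ i ∈ Finset.Icc j j, X i := by simp
  rw [h, tailSum]; exact le_iSup (fun m => ∑ i ∈ Finset.Icc j m, X i) j

lemma tailSum_mono_config {X Y : Config} (h : ∀ j, X j ≤ Y j) (j : ℤ) :
    tailSum X j ≤ tailSum Y j := by
  rw [tailSum, tailSum]
  exact iSup_mono fun m => Finset.sum_le_sum fun i _ => h i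

lemma tailSum_eq_sum {X : Config} {M' : ℤ} (hM : ∀ i, M' < i → X i = 0) (j : ℤ) :
    tailSum X j = ∑ i ∈ Finset.Icc j M', X i := by
  have key : ∀ m : ℤ, M' ≤ m → ∑ i ∈ Finset.Icc j m, X i = ∑ i ∈ Finset.Icc j M', X i := by
    intro m hm
    refine (Finset.sum_subset (Finset.Icc_subset_Icc_right hm) ?_).symm
    intro i hi hni
    simp only [Finset.mem_Icc] at hi hni
    exact hM i (by omega)
  rw [tailSum]
  refine le_antisymm (iSup_le fun m => ?_) ?_
  · rcases le_total m M' with hm | hm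
    · exact Finset.sum_le_sum_of_subset (Finset.Icc_subset_Icc_right hm)
    · exact le_of_eq (key m hm)
  · rw [← key (max M' j) (le_max_left _ _)]
    exact le_iSup (fun m => ∑ i ∈ Finset.Icc j m, X i) (max M' j)

lemma tailSum_split {X : Config} {M' : ℤ} (hM : ∀ i, M' < i → X i = 0) (j : ℤ) :
    tailSum X j = X j + tailSum X (j + 1) := by
  have hM2 : ∀ i, max M' j < i → X i = 0 := fun i hi => hM i (by omega)
  rw [tailSum_eq_sum hM2, tailSum_eq_sum hM2]
  have hins : Finset.Icc j (max M' j) = insert j (Finset.Icc (j+1) (max M' j)) := by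
    ext i; simp only [Finset.mem_Icc, Finset.mem_insert]; omega
  rw [hins, Finset.sum_insert (by simp)]

lemma tailSum_zero_of_empty {X : Config} {M' : ℤ} (hM : ∀ i, M' < i → X i = 0) {j : ℤ}
    (hj : M' < j) : tailSum X j = 0 := by
  rw [tailSum_eq_sum hM j, Finset.Icc_eq_empty (by omega), Finset.sum_empty]

lemma exist_ball {X : Config} {M' : ℤ} (hM : ∀ i, M' < i → X i = 0) {ξ : ℕ} {j : ℤ}
    (h1 : 1 ≤ ξ) (h2 : (ξ : ℕ∞) ≤ tailSum X j) :
    ∃ b : ℤ, j < b ∧ b ≤ M' + 1 ∧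
      ((ξ : ℕ∞) ≤ tailSum X (b - 1) ∧ ¬ (ξ : ℕ∞) ≤ tailSum X b) := by
  set Q : ℤ → Prop := fun b => ¬ (ξ : ℕ∞) ≤ tailSum X b with hQ
  have hQtop : Q (M' + 1) := by
    rw [hQ]; simp only
    rw [tailSum_zero_of_empty hM (by omega)]
    intro hle
    have : ξ = 0 := by exact_mod_cast le_antisymm hle (zero_le)
    omega
  have hbdd : ∀ b : ℤ, Q b → j + 1 ≤ b := by
    intro b hb
    by_contra hcon
    exact hb (le_trans h2 (tailSum_mono_right X (by omega)))
  obtain ⟨b, hbQ, hbmin⟩ := Int.exists_least_of_bdd (P := Q) ⟨j + 1, hbdd⟩ ⟨M' + 1, hQtop⟩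
  refine ⟨b, by have := hbdd b hbQ; omega, hbmin _ hQtop, ?_, hbQ⟩
  by_contra hcon
  have := hbmin _ hcon
  omega

lemma tailSum_phi_ge {X : Config} {M' : ℤ} (hM : ∀ i, M' < i → X i = 0) {ξ : ℕ} {j : ℤ}
    (h1 : 1 ≤ ξ) (h2 : (ξ : ℕ∞) ≤ tailSum X j) :
    tailSum X j + 1 ≤ tailSum (Phi ξ X) j := by
  obtain ⟨b, hjb, hbM, hcond⟩ := exist_ball hM h1 h2
  have hsum : tailSum X j = ∑ i ∈ Finset.Icc j (M' + 1), X i :=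
    tailSum_eq_sum (fun i hi => hM i (by omega)) j
  have hone : (1 : ℕ∞) ≤ ∑ i ∈ Finset.Icc j (M' + 1),
      (if (ξ : ℕ∞) ≤ tailSum X (i - 1) ∧ ¬ (ξ : ℕ∞) ≤ tailSum X i then 1 else 0) := by
    have hb : b ∈ Finset.Icc j (M' + 1) := by simp only [Finset.mem_Icc]; omega
    calc (1 : ℕ∞) = if (ξ : ℕ∞) ≤ tailSum X (b - 1) ∧ ¬ (ξ : ℕ∞) ≤ tailSum X b then 1 else 0 := by
          rw [if_pos hcond]
      _ ≤ _ := Finset.single_le_sum (f := fun i => if (ξ : ℕ∞) ≤ tailSum X (i - 1) ∧ ¬ (ξ : ℕ∞) ≤ tailSum X i then 1 else 0) (fun (i : ℤ) _ => zero_le) hb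
  calc tailSum X j + 1 ≤ (∑ i ∈ Finset.Icc j (M' + 1), X i)
        + ∑ i ∈ Finset.Icc j (M' + 1),
          (if (ξ : ℕ∞) ≤ tailSum X (i - 1) ∧ ¬ (ξ : ℕ∞) ≤ tailSum X i then 1 else 0) := by
        rw [hsum]; exact add_le_add le_rfl hone
    _ = ∑ i ∈ Finset.Icc j (M' + 1), Phi ξ X i := by
        rw [← Finset.sum_add_distrib]; rfl
    _ ≤ tailSum (Phi ξ X) j := by
        rw [tailSum]
        exact le_iSup (fun m => ∑ i ∈ Finset.Icc j m, Phi ξ X i) (M' + 1)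


section IBM
variable {X₀ : Config} {M : ℤ} (hM₀ : ∀ j, X₀ j ≠ 0 → j ≤ M) (u : ℕ → ℕ)

lemma phi_eq (ξ : ℕ) (X : Config) (j : ℤ) : Phi ξ X j =
    X j + (if (ξ : ℕ∞) ≤ tailSum X (j - 1) ∧ ¬ (ξ : ℕ∞) ≤ tailSum X j then 1 else 0) := rfl

include hM₀ in
lemma ibm_support : ∀ (n : ℕ) (i : ℤ), M + n < i → ibm X₀ u n i = 0 := by
  intro n
  induction n with
  | zero => intro i hi
            by_contra hne
            have := hM₀ i hne
            simp at hi; omega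
  | succ n ih =>
      intro i hi
      have hi' : M + n < i := by push_cast at hi ⊢; omega
      have h0 : ibm X₀ u n i = 0 := ih i hi'
      show Phi (u n) (ibm X₀ u n) i = 0
      rw [phi_eq, h0, zero_add]
      rw [if_neg]
      rintro ⟨hle, hnle⟩
      have hz : tailSum (ibm X₀ u n) (i - 1) = 0 :=
        tailSum_zero_of_empty (fun i hi => ih i hi) (by push_cast at hi; omega)
      exact hnle (le_trans (hz ▸ hle) (zero_le))

lemma ibm_mono_succ (n : ℕ) (j : ℤ) : ibm X₀ u n j ≤ ibm X₀ u (n + 1) j :=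
  le_add_right le_rfl

lemma ibm_mono {n n' : ℕ} (h : n ≤ n') (j : ℤ) : ibm X₀ u n j ≤ ibm X₀ u n' j := by
  induction n' with
  | zero => simp_all
  | succ m ih =>
      rcases Nat.lt_or_ge n (m+1) with hlt | hge
      · exact le_trans (ih (by omega)) (ibm_mono_succ u m j)
      · have : n = m + 1 := by omega
        subst this; exact le_rfl

lemma ibm_tail_mono {n n' : ℕ} (h : n ≤ n') (j : ℤ) :
    tailSum (ibm X₀ u n) j ≤ tailSum (ibm X₀ u n') j :=
  tailSum_mono_config (fun i => ibm_mono u h i) j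

lemma ibm_lt_top {k : ℤ} (hk : X₀ k < ⊤) : ∀ n, ibm X₀ u n k < ⊤ := by
  intro n
  induction n with
  | zero => exact hk
  | succ n ih =>
      show Phi (u n) (ibm X₀ u n) k < ⊤
      rw [phi_eq]
      refine lt_of_le_of_lt (add_le_add le_rfl ?_) (?_ : ibm X₀ u n k + 1 < ⊤)
      · split <;> simp
      · exact WithTop.add_lt_top.mpr ⟨ih, WithTop.one_lt_top⟩

lemma ibm_prefix {u v : ℕ → ℕ} (n : ℕ) (h : ∀ i < n, u i = v i) :
    ibm X₀ u n = ibm X₀ v n := by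
  induction n with
  | zero => rfl
  | succ n ih =>
      show Phi (u n) (ibm X₀ u n) = Phi (v n) (ibm X₀ v n)
      rw [ih (fun i hi => h i (by omega)), h n (by omega)]

include hM₀ in
lemma T_incr {n : ℕ} {k : ℤ} (h1 : 1 ≤ u n) (h2 : (u n : ℕ∞) ≤ tailSum (ibm X₀ u n) k) :
    tailSum (ibm X₀ u n) k + 1 ≤ tailSum (ibm X₀ u (n + 1)) k :=
  tailSum_phi_ge (M' := M + n) (fun i hi => ibm_support hM₀ u n i hi) h1 h2

include hM₀ in
lemma window {n : ℕ} {k : ℤ} (h : ibm X₀ u (n + 1) k ≠ ibm X₀ u n k) :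
    tailSum (ibm X₀ u n) k < (u n : ℕ∞) ∧
      (u n : ℕ∞) ≤ tailSum (ibm X₀ u n) k + ibm X₀ u n (k - 1) := by
  have hPhi : Phi (u n) (ibm X₀ u n) k ≠ ibm X₀ u n k := h
  rw [phi_eq] at hPhi
  have hcond : (u n : ℕ∞) ≤ tailSum (ibm X₀ u n) (k - 1) ∧
      ¬ (u n : ℕ∞) ≤ tailSum (ibm X₀ u n) k := by
    by_contra hc
    rw [if_neg hc, add_zero] at hPhi
    exact hPhi rfl
  refine ⟨not_le.mp hcond.2, ?_⟩
  have hsplit : tailSum (ibm X₀ u n) (k - 1) =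
      ibm X₀ u n (k - 1) + tailSum (ibm X₀ u n) k := by
    have := tailSum_split (X := ibm X₀ u n) (M' := M + n)
      (fun i hi => ibm_support hM₀ u n i hi) (k - 1)
    rw [this]; ring_nf
  exact le_trans hcond.1 (le_of_eq (by rw [hsplit, add_comm]))

end IBM

section Prob
variable {Ω : Type*} [MeasurableSpace Ω] {P : Measure Ω} [IsProbabilityMeasure P]
  {μ : Measure ℕ} [IsProbabilityMeasure μ] {ξ : ℕ → Ω → ℕ}

/-- `S` only depends on the first `m` coordinates. -/
def PrefixDet (m : ℕ) (S : Set (ℕ → ℕ)) : Prop :=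
  ∀ u v : ℕ → ℕ, (∀ i < m, u i = v i) → u ∈ S → v ∈ S

def extv (m : ℕ) (v : Fin m → ℕ) : ℕ → ℕ := fun i => if h : i < m then v ⟨i, h⟩ else 0

def Cyl (ξ : ℕ → Ω → ℕ) (m : ℕ) (v : Fin m → ℕ) : Set Ω :=
  ⋂ i ∈ Finset.range m, (ξ i) ⁻¹' {extv m v i}

def CylS (ξ : ℕ → Ω → ℕ) (m : ℕ) (S : Set (ℕ → ℕ)) (v : Fin m → ℕ) : Set Ω :=
  if extv m v ∈ S then Cyl ξ m v else ∅

lemma rep (m : ℕ) (S : Set (ℕ → ℕ)) (hS : PrefixDet m S) :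
    {ω | (fun i => ξ i ω) ∈ S} = ⋃ v : Fin m → ℕ, CylS ξ m S v := by
  ext ω
  simp only [Set.mem_setOf_eq, Set.mem_iUnion]
  constructor
  · intro h
    refine ⟨fun i => ξ i ω, ?_⟩
    have hagree : ∀ i < m, ξ i ω = extv m (fun i : Fin m => ξ i ω) i := by
      intro i hi; simp [extv, dif_pos hi]
    have hmem : extv m (fun i : Fin m => ξ i ω) ∈ S := hS _ _ hagree h
    rw [CylS, if_pos hmem]
    simp only [Cyl, Set.mem_iInter, Set.mem_preimage, Set.mem_singleton_iff, Finset.mem_range]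
    exact fun i hi => (hagree i hi)
  · rintro ⟨v, hv⟩
    rw [CylS] at hv
    split_ifs at hv with hmem
    · simp only [Cyl, Set.mem_iInter, Set.mem_preimage, Set.mem_singleton_iff,
        Finset.mem_range] at hv
      exact hS (extv m v) _ (fun i hi => (hv i hi).symm) hmem
    · exact absurd hv (Set.notMem_empty ω)

lemma cyl_meas (hmeas : ∀ n, Measurable (ξ n)) (m : ℕ) (v : Fin m → ℕ) :
    MeasurableSet (Cyl ξ m v) :=
  Finset.measurableSet_biInter _ fun i _ => (hmeas i) (measurableSet_singleton _)

lemma cylS_meas (hmeas : ∀ n, Measurable (ξ n)) (m : ℕ) (S : Set (ℕ → ℕ)) (v : Fin m → ℕ) :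
    MeasurableSet (CylS ξ m S v) := by
  rw [CylS]; split_ifs
  · exact cyl_meas hmeas m v
  · exact MeasurableSet.empty

lemma prefix_meas (hmeas : ∀ n, Measurable (ξ n)) (m : ℕ) (S : Set (ℕ → ℕ))
    (hS : PrefixDet m S) : MeasurableSet {ω | (fun i => ξ i ω) ∈ S} := by
  rw [rep m S hS]
  exact MeasurableSet.iUnion fun v => cylS_meas hmeas m S v

lemma cylS_disj (m : ℕ) (S : Set (ℕ → ℕ)) :
    Pairwise (Function.onFun Disjoint (CylS ξ m S)) := by
  intro v v' hvv'
  have ⟨i, hi⟩ : ∃ i, v i ≠ v' i := Function.ne_iff.mp hvv'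
  refine Set.disjoint_left.mpr fun ω hv hv' => ?_
  rw [CylS] at hv hv'
  split_ifs at hv hv' <;> try exact absurd (by assumption) (Set.notMem_empty ω)
  simp only [Cyl, Set.mem_iInter, Set.mem_preimage, Set.mem_singleton_iff,
    Finset.mem_range] at hv hv'
  have h1 := hv i i.isLt
  have h2 := hv' i i.isLt
  rw [h1] at h2
  simp only [extv, dif_pos i.isLt] at h2
  exact hi (by simpa using h2)

lemma cyl_prob (hξ : IsIIDSeq P μ ξ) {m n : ℕ} (hmn : m ≤ n) (v : Fin m → ℕ) (W : Set ℕ) :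
    P (Cyl ξ m v ∩ ⋂ i ∈ Finset.Ico m n, (ξ i)⁻¹' W) = P (Cyl ξ m v) * μ W ^ (n - m) := by
  classical
  obtain ⟨hmeas, hind, hmap⟩ := hξ
  have hWm : MeasurableSet W := W.to_countable.measurableSet
  set sets : ℕ → Set ℕ := fun i => if i < m then {extv m v i} else W with hsets
  have hsetsm : ∀ i, MeasurableSet (sets i) := by
    intro i; rw [hsets]; dsimp only; split_ifs
    · exact measurableSet_singleton _
    · exact hWm
  have hsplitI : ∀ (g : ℕ → Set Ω),
      (⋂ i ∈ Finset.range n, g i) = (⋂ i ∈ Finset.range m, g i) ∩ ⋂ i ∈ Finset.Ico m n, g i := by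
    intro g; ext ω
    simp only [Set.mem_iInter, Set.mem_inter_iff, Finset.mem_range, Finset.mem_Ico]
    constructor
    · exact fun h => ⟨fun i hi => h i (lt_of_lt_of_le hi hmn), fun i hi => h i hi.2⟩
    · rintro ⟨h1, h2⟩ i hi
      rcases Nat.lt_or_ge i m with h | h
      · exact h1 i h
      · exact h2 i ⟨h, hi⟩
  have e1 : (⋂ i ∈ Finset.range m, (ξ i)⁻¹' sets i) = Cyl ξ m v := by
    rw [Cyl]
    refine Set.iInter₂_congr fun i hi => ?_
    rw [hsets]; dsimp only; rw [if_pos (Finset.mem_range.mp hi)]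
  have e2 : (⋂ i ∈ Finset.Ico m n, (ξ i)⁻¹' sets i) = ⋂ i ∈ Finset.Ico m n, (ξ i)⁻¹' W := by
    refine Set.iInter₂_congr fun i hi => ?_
    have hge : ¬ i < m := by have := (Finset.mem_Ico.mp hi).1; omega
    rw [hsets]; dsimp only; rw [if_neg hge]
  have hprodL := hind.measure_inter_preimage_eq_mul (Finset.range n)
    (sets := sets) (fun i _ => hsetsm i)
  rw [hsplitI, e1, e2] at hprodL
  have hprodS := hind.measure_inter_preimage_eq_mul (Finset.range m)
    (sets := sets) (fun i _ => hsetsm i)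
  rw [e1] at hprodS
  have hsingle : ∀ i, P ((ξ i)⁻¹' (sets i)) = μ (sets i) := by
    intro i
    rw [← hmap i, Measure.map_apply (hmeas i) (hsetsm i)]
  have hprodsplit : ∏ i ∈ Finset.range n, P ((ξ i)⁻¹' sets i)
      = (∏ i ∈ Finset.range m, P ((ξ i)⁻¹' sets i)) * μ W ^ (n - m) := by
    rw [Finset.range_eq_Ico, ← Finset.prod_Ico_consecutive _ (Nat.zero_le m) hmn,
      ← Finset.range_eq_Ico]
    congr 1
    calc ∏ i ∈ Finset.Ico m n, P ((ξ i)⁻¹' sets i)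
        = ∏ i ∈ Finset.Ico m n, μ W := by
          refine Finset.prod_congr rfl fun i hi => ?_
          have hge : ¬ i < m := by have := (Finset.mem_Ico.mp hi).1; omega
          rw [hsingle i, hsets]; dsimp only; rw [if_neg hge]
      _ = μ W ^ (n - m) := by rw [Finset.prod_const, Nat.card_Ico]
  rw [hprodL, hprodsplit, ← hprodS]

lemma prefix_indep (hξ : IsIIDSeq P μ ξ) {m n : ℕ} (hmn : m ≤ n) (S : Set (ℕ → ℕ))
    (hS : PrefixDet m S) (W : Set ℕ) :
    P ({ω | (fun i => ξ i ω) ∈ S} ∩ ⋂ i ∈ Finset.Ico m n, (ξ i)⁻¹' W)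
      = P {ω | (fun i => ξ i ω) ∈ S} * μ W ^ (n - m) := by
  classical
  have hmeas := hξ.1
  have hI : MeasurableSet (⋂ i ∈ Finset.Ico m n, (ξ i)⁻¹' W) :=
    Finset.measurableSet_biInter _ fun i _ => (hmeas i) (W.to_countable.measurableSet)
  rw [rep m S hS, Set.iUnion_inter]
  have key1 := measure_iUnion (μ := P)
    (f := fun v : Fin m → ℕ => CylS ξ m S v ∩ ⋂ i ∈ Finset.Ico m n, (ξ i)⁻¹' W)
    (fun v v' hvv' => Disjoint.mono Set.inter_subset_left Set.inter_subset_left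
      (cylS_disj m S hvv'))
    (fun v => (cylS_meas hmeas m S v).inter hI)
  rw [key1, measure_iUnion (cylS_disj m S) (cylS_meas hmeas m S)]
  rw [← ENNReal.tsum_mul_right]
  congr 1
  funext v
  rw [CylS]
  split_ifs with hmem
  · exact cyl_prob hξ hmn v W
  · simp


lemma PrefixDet.mono {m m' : ℕ} (h : m ≤ m') {S : Set (ℕ → ℕ)} (hS : PrefixDet m S) :
    PrefixDet m' S :=
  fun u v hu => hS u v (fun i hi => hu i (lt_of_lt_of_le hi h))

lemma PrefixDet.compl {m : ℕ} {S : Set (ℕ → ℕ)} (hS : PrefixDet m S) : PrefixDet m Sᶜ := by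
  intro u v h hu hv
  exact hu (hS v u (fun i hi => (h i hi).symm) hv)

def Sset (X₀ : Config) (k : ℤ) (n : ℕ) (t : ℕ) : Set (ℕ → ℕ) :=
  {u | tailSum (ibm X₀ u n) k = (t : ℕ∞)}

def Fset (X₀ : Config) (k : ℤ) (n : ℕ) (t : ℕ) : Set (ℕ → ℕ) :=
  Sset X₀ k n t ∩ ⋂ m ∈ Finset.range n, (Sset X₀ k m t)ᶜ

lemma Sset_prefix (X₀ : Config) (k : ℤ) (n t : ℕ) : PrefixDet n (Sset X₀ k n t) := by
  intro u v h hu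
  have : ibm X₀ u n = ibm X₀ v n := ibm_prefix n h
  simpa only [Sset, Set.mem_setOf_eq, ← this] using hu

lemma Fset_prefix (X₀ : Config) (k : ℤ) (n t : ℕ) : PrefixDet n (Fset X₀ k n t) := by
  intro u v h hu
  obtain ⟨h1, h2⟩ := hu
  refine ⟨Sset_prefix X₀ k n t u v h h1, ?_⟩
  simp only [Set.mem_iInter, Finset.mem_range, Set.mem_compl_iff] at h2 ⊢
  intro m hm
  exact ((Sset_prefix X₀ k m t).mono (le_of_lt hm)).compl u v h (h2 m hm)

lemma Fset_subset (X₀ : Config) (k : ℤ) (n t : ℕ) : Fset X₀ k n t ⊆ Sset X₀ k n t :=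
  Set.inter_subset_left

lemma Fset_disj_Sset (X₀ : Config) (k : ℤ) {m n : ℕ} (h : m < n) (t : ℕ) :
    Fset X₀ k n t ⊆ (Sset X₀ k m t)ᶜ := by
  intro u hu hmem
  have h2 := hu.2
  simp only [Set.mem_iInter, Finset.mem_range, Set.mem_compl_iff] at h2
  exact h2 m h hmem

lemma cast_succ_le_cast_false (t : ℕ) : ¬ ((t : ℕ∞) + 1 ≤ (t : ℕ∞)) := by
  intro h
  rw [← Nat.cast_one, ← Nat.cast_add, Nat.cast_le] at h
  omega

/-- First hit of level `t`, with no small values in between. -/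
lemma first_hit {X₀ : Config} {M : ℤ} (hM₀ : ∀ j, X₀ j ≠ 0 → j ≤ M) (k : ℤ) (u : ℕ → ℕ)
    {n t : ℕ} (hu : u ∈ Sset X₀ k n t) :
    ∃ m, m ≤ n ∧ u ∈ Fset X₀ k m t ∧ ∀ i, m ≤ i → i < n → ¬(1 ≤ u i ∧ u i ≤ t) := by
  have hex : ∃ m, u ∈ Sset X₀ k m t := ⟨n, hu⟩
  classical
  set m := Nat.find hex with hm
  have hmS : u ∈ Sset X₀ k m t := Nat.find_spec hex
  have hmn : m ≤ n := Nat.find_le hu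
  refine ⟨m, hmn, ⟨hmS, ?_⟩, ?_⟩
  · simp only [Set.mem_iInter, Finset.mem_range]
    intro i hi
    exact Nat.find_min hex hi
  · intro i hmi hin hbad
    have hTi : tailSum (ibm X₀ u i) k = (t : ℕ∞) := by
      refine le_antisymm ?_ ?_
      · rw [← hu]; exact ibm_tail_mono u (by omega) k
      · rw [← hmS]; exact ibm_tail_mono u hmi k
    have hTi1 : tailSum (ibm X₀ u (i+1)) k ≤ (t : ℕ∞) := by
      rw [← hu]; exact ibm_tail_mono u (by omega) k
    have hincr := T_incr hM₀ u (n := i) (k := k) hbad.1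
      (by rw [hTi]; exact_mod_cast hbad.2)
    rw [hTi] at hincr
    exact cast_succ_le_cast_false t (le_trans hincr hTi1)

/-- On a step where bin `k` gains a ball and bin `k-1` has at most `c` balls,
the driving value lies in the window `(T, T+c]` above the current tail `T`. -/
lemma coverage_step {X₀ : Config} {M : ℤ} (hM₀ : ∀ j, X₀ j ≠ 0 → j ≤ M) (k : ℤ) (u : ℕ → ℕ)
    {n c : ℕ} (hchange : ibm X₀ u (n+1) k ≠ ibm X₀ u n k)
    (hc : ibm X₀ u n (k-1) ≤ (c : ℕ∞)) :
    ∃ t : ℕ, tailSum (ibm X₀ u n) k = (t : ℕ∞) ∧ t < u n ∧ u n ≤ t + c := by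
  obtain ⟨hlt, hle⟩ := window hM₀ u hchange
  have hne : tailSum (ibm X₀ u n) k ≠ ⊤ := by
    intro htop
    rw [htop] at hlt
    exact absurd hlt (by simp)
  obtain ⟨t, ht⟩ := WithTop.ne_top_iff_exists.mp hne
  refine ⟨t, ht.symm, ?_, ?_⟩
  · rw [← ht] at hlt; exact Nat.cast_lt.mp hlt
  · rw [← ht] at hle
    have h3 : (u n : ℕ∞) ≤ ((t : ℕ∞) + (c : ℕ∞)) := le_trans hle (add_le_add le_rfl hc)
    rw [← Nat.cast_add] at h3
    exact Nat.cast_le.mp h3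


lemma tsum_ite_geom (q : ℝ≥0∞) : ∀ m : ℕ,
    (∑' n : ℕ, (if m ≤ n then q^(n-m) else 0)) = ∑' j : ℕ, q^j := by
  intro m
  induction m with
  | zero => simp
  | succ m ih =>
      rw [tsum_eq_zero_add' ENNReal.summable]
      have h0 : (if m + 1 ≤ 0 then q^(0-(m+1)) else 0) = 0 := by simp
      rw [h0, zero_add, ← ih]
      congr 1
      funext n
      by_cases h : m ≤ n
      · rw [if_pos h, if_pos (by omega)]
        congr 1
        omega
      · rw [if_neg h, if_neg (by omega)]

/-- Expected number of steps spent at level `t` is at most `p⁻¹`. -/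
lemma level_sum {Ω : Type*} [MeasurableSpace Ω] {P : Measure Ω} [IsProbabilityMeasure P]
    {μ : Measure ℕ} [IsProbabilityMeasure μ] {ξ : ℕ → Ω → ℕ} (hξ : IsIIDSeq P μ ξ)
    (X₀ : Config) (k : ℤ) {M : ℤ} (hM₀ : ∀ j, X₀ j ≠ 0 → j ≤ M)
    (t : ℕ) {p : ℝ≥0∞} (hp : p ≤ μ {x : ℕ | 1 ≤ x ∧ x ≤ t}) (hp1 : p ≤ 1) :
    ∑' n : ℕ, P {ω | (fun i => ξ i ω) ∈ Sset X₀ k n t} ≤ p⁻¹ := by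
  classical
  set U : Set ℕ := {x : ℕ | 1 ≤ x ∧ x ≤ t}ᶜ with hU
  set q : ℝ≥0∞ := 1 - p with hq
  have hμU : μ U ≤ q := by
    rw [hU, measure_compl (Set.to_countable _).measurableSet (measure_ne_top μ _), hq]
    simpa using tsub_le_tsub_left hp 1
  set a : ℕ → ℝ≥0∞ := fun m => P {ω | (fun i => ξ i ω) ∈ Fset X₀ k m t} with ha
  -- step bound
  have hstep : ∀ n : ℕ, P {ω | (fun i => ξ i ω) ∈ Sset X₀ k n t}
      ≤ ∑ m ∈ Finset.range (n+1), a m * q^(n-m) := by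
    intro n
    have hincl : {ω | (fun i => ξ i ω) ∈ Sset X₀ k n t} ⊆
        ⋃ m ∈ Finset.range (n+1),
          ({ω | (fun i => ξ i ω) ∈ Fset X₀ k m t} ∩ ⋂ i ∈ Finset.Ico m n, (ξ i)⁻¹' U) := by
      intro ω hω
      obtain ⟨m, hmn, hmF, hmU⟩ := first_hit hM₀ k _ hω
      simp only [Set.mem_iUnion, Finset.mem_range]
      refine ⟨m, by omega, hmF, ?_⟩
      simp only [Set.mem_iInter, Finset.mem_Ico, Set.mem_preimage]
      rintro i ⟨h1, h2⟩
      exact hmU i h1 h2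
    refine le_trans (le_trans (measure_mono hincl) (measure_biUnion_finset_le _ _)) ?_
    refine Finset.sum_le_sum fun m hm => ?_
    have hmn : m ≤ n := by simp only [Finset.mem_range] at hm; omega
    rw [prefix_indep hξ hmn _ (Fset_prefix X₀ k m t) U]
    exact mul_le_mul_right (pow_le_pow_left₀ (zero_le) hμU _) _
  -- sum the bound
  set F : ℕ → ℕ → ℝ≥0∞ := fun n m => if m ≤ n then a m * q^(n-m) else 0 with hF
  have heq1 : ∀ n, (∑ m ∈ Finset.range (n+1), a m * q^(n-m)) = ∑' m, F n m := by
    intro n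
    rw [tsum_eq_sum (s := Finset.range (n+1))
      (fun m hm => by rw [hF]; exact if_neg (by simp only [Finset.mem_range] at hm; omega))]
    refine Finset.sum_congr rfl fun m hm => ?_
    rw [hF]; exact (if_pos (by simp only [Finset.mem_range] at hm; omega)).symm
  have hFa : ∀ m, (∑' n, F n m) = a m * ∑' j : ℕ, q^j := by
    intro m
    have : ∀ n, F n m = a m * (if m ≤ n then q^(n-m) else 0) := by
      intro n; rw [hF]; dsimp only; split_ifs <;> simp
    simp_rw [this]
    rw [ENNReal.tsum_mul_left, tsum_ite_geom q m]
  -- disjointness of the F-events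
  have hFdisj : Pairwise (Function.onFun Disjoint fun m => {ω | (fun i => ξ i ω) ∈ Fset X₀ k m t}) := by
    intro m m' hmm'
    rcases Nat.lt_or_ge m m' with h | h
    · refine Set.disjoint_left.mpr fun ω h1 h2 => ?_
      exact (Fset_disj_Sset X₀ k h t) h2 (Fset_subset X₀ k m t h1)
    · have h' : m' < m := by omega
      refine Set.disjoint_left.mpr fun ω h1 h2 => ?_
      exact (Fset_disj_Sset X₀ k h' t) h1 (Fset_subset X₀ k m' t h2)
  have hsuma : (∑' m, a m) ≤ 1 := by
    rw [ha]
    rw [← measure_iUnion hFdisj (fun m => prefix_meas hξ.1 m _ (Fset_prefix X₀ k m t))]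
    exact prob_le_one
  have hgeom : (∑' j : ℕ, q^j) = p⁻¹ := by
    rw [ENNReal.tsum_geometric, hq, ENNReal.sub_sub_cancel ENNReal.one_ne_top hp1]
  calc ∑' n, P {ω | (fun i => ξ i ω) ∈ Sset X₀ k n t}
      ≤ ∑' n, ∑' m, F n m := by
        refine ENNReal.tsum_le_tsum fun n => ?_
        rw [← heq1 n]; exact hstep n
    _ = ∑' m, ∑' n, F n m := ENNReal.tsum_comm
    _ = ∑' m, a m * ∑' j : ℕ, q^j := by simp_rw [hFa]
    _ = (∑' m, a m) * ∑' j : ℕ, q^j := ENNReal.tsum_mul_right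
    _ ≤ 1 * p⁻¹ := by rw [hgeom]; exact mul_le_mul_left hsuma _
    _ = p⁻¹ := one_mul _


lemma window_measure (μ : Measure ℕ) (t c : ℕ) :
    μ {x : ℕ | t < x ∧ x ≤ t + c} = ∑ i ∈ Finset.Icc 1 c, μ {t + i} := by
  have hrep : {x : ℕ | t < x ∧ x ≤ t + c} = ⋃ i ∈ Finset.Icc 1 c, ({t + i} : Set ℕ) := by
    ext x
    simp only [Set.mem_setOf_eq, Set.mem_iUnion, Set.mem_singleton_iff, Finset.mem_Icc]
    constructor
    · rintro ⟨h1, h2⟩; exact ⟨x - t, by omega, by omega⟩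
    · rintro ⟨i, hi, rfl⟩; omega
  rw [hrep, measure_biUnion_finset ?_ (fun i _ => measurableSet_singleton _)]
  intro i _ i' _ hii'
  simp only [Function.onFun, Set.disjoint_singleton_left, Set.mem_singleton_iff]
  omega

lemma window_tsum (μ : Measure ℕ) [IsProbabilityMeasure μ] (t₀ c : ℕ) :
    (∑' s : ℕ, μ {x : ℕ | t₀ + s < x ∧ x ≤ t₀ + s + c}) ≤ (c : ℝ≥0∞) := by
  calc (∑' s : ℕ, μ {x : ℕ | t₀ + s < x ∧ x ≤ t₀ + s + c})
      = ∑' s : ℕ, ∑ i ∈ Finset.Icc 1 c, μ {t₀ + s + i} := by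
        exact tsum_congr fun s => window_measure μ (t₀ + s) c
    _ = ∑ i ∈ Finset.Icc 1 c, ∑' s : ℕ, μ {t₀ + s + i} :=
        Summable.tsum_finsetSum (fun i _ => ENNReal.summable)
    _ ≤ ∑ i ∈ Finset.Icc 1 c, 1 := by
        refine Finset.sum_le_sum fun i _ => ?_
        have hdisj : Pairwise (Function.onFun Disjoint fun s : ℕ => ({t₀ + s + i} : Set ℕ)) := by
          intro s s' hss'
          simp only [Function.onFun, Set.disjoint_singleton_left, Set.mem_singleton_iff]
          omega
        rw [← measure_iUnion hdisj (fun s => measurableSet_singleton _)]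
        exact prob_le_one
    _ = (c : ℝ≥0∞) := by
        rw [Finset.sum_const, Nat.card_Icc]
        simp

end Prob

end Det

/-- For `X₀ ∈ 𝒮` with `X₀(k) < ∞`, almost surely
`{X_∞(k) = ∞} ⊆ {X_∞(k-1) = ∞}`. -/
theorem stmt9 {Ω : Type*} [MeasurableSpace Ω] (P : Measure Ω) [IsProbabilityMeasure P]
    (μ : Measure ℕ) [IsProbabilityMeasure μ] (hμ0 : μ {0} = 0)
    (ξ : ℕ → Ω → ℕ) (hξ : IsIIDSeq P μ ξ)
    (X₀ : Config) (hX₀ : IsConfig X₀) (k : ℤ) (hk : X₀ k < ⊤) :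
    ∀ᵐ ω ∂P, ibmLimit X₀ (fun i => ξ i ω) k = ⊤ →
      ibmLimit X₀ (fun i => ξ i ω) (k - 1) = ⊤ := by
  classical
  obtain ⟨-, M₀, hM₀'⟩ := hX₀
  set M : ℤ := max M₀ k with hMdef
  have hM₀ : ∀ j, X₀ j ≠ 0 → j ≤ M := fun j hj => le_trans (hM₀' j hj) (le_max_left _ _)
  -- choice of t₀ with positive mass below it
  have hex : ∃ t₀ : ℕ, 0 < μ {x : ℕ | 1 ≤ x ∧ x ≤ t₀} := by
    by_contra hcon
    push_neg at hcon
    have hall : ∀ t₀ : ℕ, μ {x : ℕ | 1 ≤ x ∧ x ≤ t₀} = 0 :=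
      fun t₀ => le_antisymm (hcon t₀) (zero_le)
    have hcover : {x : ℕ | 1 ≤ x} ⊆ ⋃ t₀ : ℕ, {x : ℕ | 1 ≤ x ∧ x ≤ t₀} := fun x hx =>
      Set.mem_iUnion.mpr ⟨x, hx, le_rfl⟩
    have h1 : μ {x : ℕ | 1 ≤ x} = 0 :=
      measure_mono_null hcover (measure_iUnion_null fun t₀ => hall t₀)
    have h2 : {x : ℕ | 1 ≤ x} = ({0} : Set ℕ)ᶜ := by
      ext x; simp [Nat.one_le_iff_ne_zero]
    rw [h2, measure_compl (measurableSet_singleton _) (measure_ne_top μ _), hμ0] at h1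
    simp at h1
  obtain ⟨t₀, hp0⟩ := hex
  set p : ℝ≥0∞ := μ {x : ℕ | 1 ≤ x ∧ x ≤ t₀} with hpdef
  have hp1 : p ≤ 1 := prob_le_one
  -- each Z_c is null
  have hZc : ∀ c : ℕ, P {ω | ibmLimit X₀ (fun i => ξ i ω) k = ⊤ ∧
      ∀ n : ℕ, ibm X₀ (fun i => ξ i ω) n (k-1) ≤ (c : ℕ∞)} = 0 := by
    intro c
    set W : ℕ → Set ℕ := fun t => {x : ℕ | t < x ∧ x ≤ t + c} with hWdef
    set Bev : ℕ → Set Ω := fun n => ⋃ s : ℕ,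
      ({ω | (fun i => ξ i ω) ∈ Sset X₀ k n (t₀ + s)} ∩ (ξ n)⁻¹' (W (t₀ + s))) with hBdef
    have hterm : ∀ n s : ℕ,
        P ({ω | (fun i => ξ i ω) ∈ Sset X₀ k n (t₀ + s)} ∩ (ξ n)⁻¹' (W (t₀ + s)))
        = P {ω | (fun i => ξ i ω) ∈ Sset X₀ k n (t₀ + s)} * μ (W (t₀ + s)) := by
      intro n s
      have h := prefix_indep hξ (Nat.le_succ n) (Sset X₀ k n (t₀+s))
        (Sset_prefix X₀ k n (t₀+s)) (W (t₀+s))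
      have hIco : Finset.Ico n (n+1) = {n} := Nat.Ico_succ_singleton n
      have hpow : n + 1 - n = 1 := by omega
      rw [hIco, Finset.set_biInter_singleton, hpow, pow_one] at h
      exact h
    have hchain : ∑' n : ℕ, P (Bev n) ≤ p⁻¹ * c := by
      calc ∑' n : ℕ, P (Bev n)
          ≤ ∑' n : ℕ, ∑' s : ℕ,
            P {ω | (fun i => ξ i ω) ∈ Sset X₀ k n (t₀ + s)} * μ (W (t₀ + s)) := by
            refine ENNReal.tsum_le_tsum fun n => ?_
            refine le_trans (measure_iUnion_le _) (le_of_eq (tsum_congr fun s => hterm n s))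
        _ = ∑' s : ℕ, ∑' n : ℕ,
            P {ω | (fun i => ξ i ω) ∈ Sset X₀ k n (t₀ + s)} * μ (W (t₀ + s)) :=
            ENNReal.tsum_comm
        _ = ∑' s : ℕ, (∑' n : ℕ,
            P {ω | (fun i => ξ i ω) ∈ Sset X₀ k n (t₀ + s)}) * μ (W (t₀ + s)) :=
            tsum_congr fun s => ENNReal.tsum_mul_right
        _ ≤ ∑' s : ℕ, p⁻¹ * μ (W (t₀ + s)) := by
            refine ENNReal.tsum_le_tsum fun s => mul_le_mul_left ?_ _
            refine level_sum hξ X₀ k hM₀ (t₀ + s) ?_ hp1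
            refine measure_mono fun x hx => ⟨hx.1, le_trans hx.2 (by omega)⟩
        _ = p⁻¹ * ∑' s : ℕ, μ (W (t₀ + s)) := ENNReal.tsum_mul_left
        _ ≤ p⁻¹ * c := mul_le_mul_right (window_tsum μ t₀ c) _
    have hsum : ∑' n : ℕ, P (Bev n) ≠ ⊤ := by
      refine ne_top_of_le_ne_top ?_ hchain
      exact ENNReal.mul_ne_top (ENNReal.inv_ne_top.mpr (ne_of_gt hp0))
        (ENNReal.natCast_ne_top c)
    have hBC : P (Filter.limsup Bev Filter.atTop) = 0 := measure_limsup_atTop_eq_zero hsum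
    refine measure_mono_null ?_ hBC
    -- coverage
    intro ω hω
    obtain ⟨hlim, hc⟩ := hω
    set u : ℕ → ℕ := fun i => ξ i ω with hu
    have hfin : ∀ n, ibm X₀ u n k < ⊤ := ibm_lt_top u hk
    have hn₁ : ∃ n₁ : ℕ, (t₀ : ℕ∞) ≤ ibm X₀ u n₁ k := by
      by_contra hcon
      push_neg at hcon
      have hsup : ibmLimit X₀ u k ≤ (t₀ : ℕ∞) := iSup_le fun n => le_of_lt (hcon n)
      rw [hlim] at hsup
      exact absurd hsup (by simp)
    obtain ⟨n₁, hn₁⟩ := hn₁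
    rw [Filter.limsup_eq_iInf_iSup_of_nat]
    simp only [Set.iInf_eq_iInter, Set.iSup_eq_iUnion, Set.mem_iInter, Set.mem_iUnion]
    intro N
    have hchange : ∃ n, max N n₁ ≤ n ∧ ibm X₀ u (n+1) k ≠ ibm X₀ u n k := by
      by_contra hcon
      push_neg at hcon
      have hconst : ∀ n, max N n₁ ≤ n → ibm X₀ u n k = ibm X₀ u (max N n₁) k := by
        intro n hn
        induction n with
        | zero =>
            have h0 : max N n₁ = 0 := by omega
            rw [h0]
        | succ n ih =>
            rcases Nat.lt_or_ge n (max N n₁) with h | h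
            · have heq : max N n₁ = n+1 := by omega
              rw [heq]
            · rw [hcon n h, ih h]
      have hble : ibmLimit X₀ u k ≤ ibm X₀ u (max N n₁) k := by
        refine iSup_le fun n => ?_
        rcases Nat.le_total n (max N n₁) with h | h
        · exact ibm_mono u h k
        · exact le_of_eq (hconst n h)
      rw [hlim, top_le_iff] at hble
      exact (ne_of_lt (hfin (max N n₁))) hble
    obtain ⟨n, hnN, hch⟩ := hchange
    obtain ⟨t, hTt, hlt, hle⟩ := coverage_step hM₀ k u hch (hc n)
    have htt₀ : t₀ ≤ t := by
      have h1 : (t₀ : ℕ∞) ≤ (t : ℕ∞) := by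
        rw [← hTt]
        exact le_trans hn₁ (le_trans
          (ibm_mono u (le_trans (le_max_right N n₁) hnN) k) (le_tailSum _ k))
      exact Nat.cast_le.mp h1
    refine ⟨n, le_trans (le_max_left N n₁) hnN, ?_⟩
    refine Set.mem_iUnion.mpr ⟨t - t₀, ?_, ?_⟩
    · show tailSum (ibm X₀ u n) k = ((t₀ + (t - t₀) : ℕ) : ℕ∞)
      rw [hTt]
      congr 1
      omega
    · show ξ n ω ∈ W (t₀ + (t - t₀))
      have heq : t₀ + (t - t₀) = t := by omega
      rw [heq]
      exact ⟨hlt, hle⟩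
  -- assemble
  have hsub : {ω | ¬ (ibmLimit X₀ (fun i => ξ i ω) k = ⊤ →
      ibmLimit X₀ (fun i => ξ i ω) (k-1) = ⊤)}
      ⊆ ⋃ c : ℕ, {ω | ibmLimit X₀ (fun i => ξ i ω) k = ⊤ ∧
        ∀ n : ℕ, ibm X₀ (fun i => ξ i ω) n (k-1) ≤ (c : ℕ∞)} := by
    intro ω hω
    simp only [Set.mem_setOf_eq, Classical.not_imp] at hω
    obtain ⟨hA, hB⟩ := hω
    obtain ⟨c, hc⟩ := WithTop.ne_top_iff_exists.mp hB
    refine Set.mem_iUnion.mpr ⟨c, hA, fun n => ?_⟩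
    have hle' : ibm X₀ (fun i => ξ i ω) n (k-1) ≤ ibmLimit X₀ (fun i => ξ i ω) (k-1) :=
      le_iSup (fun n => ibm X₀ (fun i => ξ i ω) n (k - 1)) n
    rw [← hc] at hle'
    exact_mod_cast hle'
  rw [ae_iff]
  exact measure_mono_null hsub (measure_iUnion_null fun c => hZc c)
end
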